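/- arXiv:2512.14886 — 2 statements merged into one kernel-verified Lean document; each statement's English description precedes it below -/
import Mathlib

section
/- Let Ĝ be an ℱ-free signed bigraph, and let T be an induced tadpole in Ĝ with vertices labeled w, y, z, x_k, …, x_1 = x (x is the end and w, y, z are the heads). Let x' be a vertex of Ĝ not on T such that either xx' is an edge of Ĝ, or x and x' have a common neighbour that is adjacent to no vertex of T other than x. If x' is adjacent to some head of T, then x' is completely adjacent to T by positive edges, except that the edges x'x and x'w, when present, may be of either sign. -/
universe u

/-! ## Basic unsigned notions for bipartite graphs -/

/-- `G` has an induced cycle of length at least 6 (signs, if any, are arbitrary). -/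
def HasLongInducedCycle {V : Type u} (G : SimpleGraph V) : Prop :=
  ∃ n : ℕ, 6 ≤ n ∧ ∃ f : ZMod n → V, Function.Injective f ∧
    ∀ i j : ZMod n, G.Adj (f i) (f j) ↔ (j = i + 1 ∨ i = j + 1)

/-- A graph is separable if it contains an induced `2K₂`. -/
def IsSeparableGraph {V : Type u} (G : SimpleGraph V) : Prop :=
  ∃ a b c d : V, [a, b, c, d].Pairwise (· ≠ ·) ∧
    G.Adj a b ∧ G.Adj c d ∧ ¬ G.Adj a c ∧ ¬ G.Adj a d ∧ ¬ G.Adj b c ∧ ¬ G.Adj b d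

/-- An edge `ab` of a bipartite graph is simplicial if every vertex of `N(a) - {b}`
is adjacent to every vertex of `N(b) - {a}`. -/
def SimplicialEdge {V : Type u} (G : SimpleGraph V) (a b : V) : Prop :=
  G.Adj a b ∧ ∀ c ∈ G.neighborSet a \ {b}, ∀ d ∈ G.neighborSet b \ {a}, G.Adj c d

/-- A canonical ordering of a bigraph with bipartition given by `side`
(`X` is the `side = true` part, `Y` the `side = false` part): the neighbourhoods of
the `x`'s are decreasing and those of the `y`'s are increasing. -/
def IsCanonicalOrdering {V : Type u} (G : SimpleGraph V) (side : V → Bool)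
    {α β : ℕ} (x : Fin α → V) (y : Fin β → V) : Prop :=
  Function.Injective x ∧ Function.Injective y ∧
  (∀ w : V, side w = true ↔ w ∈ Set.range x) ∧
  (∀ w : V, side w = false ↔ w ∈ Set.range y) ∧
  (∀ i j : Fin α, i ≤ j → G.neighborSet (x j) ⊆ G.neighborSet (x i)) ∧
  (∀ i j : Fin β, i ≤ j → G.neighborSet (y i) ⊆ G.neighborSet (y j))

/-- `H` is a non-trivial (i.e. containing at least one edge) connected component
of `G - S`. -/
def IsNontrivialComponentOf {V : Type u} (G : SimpleGraph V) (S H : Set V) : Prop :=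
  H ⊆ Sᶜ ∧ (G.induce H).Connected ∧
  (∀ a ∈ H, ∀ b ∈ Sᶜ, G.Adj a b → b ∈ H) ∧
  (∃ a ∈ H, ∃ b ∈ H, G.Adj a b)

/-- `S` minimally separates the non-trivial components `H` and `H'` of `G - S`:
every vertex of `S` has a neighbour in `H` and a neighbour in `H'`. -/
def MinimallySeparates {V : Type u} (G : SimpleGraph V) (S H H' : Set V) : Prop :=
  IsNontrivialComponentOf G S H ∧ IsNontrivialComponentOf G S H' ∧ H ≠ H' ∧
  ∀ s ∈ S, (∃ a ∈ H, G.Adj s a) ∧ (∃ a ∈ H', G.Adj s a)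

/-! ## Signed bigraphs -/

/-- A signed bigraph: a bipartite graph (with bipartition recorded by `side`)
whose edges carry a sign (`true` = positive, `false` = negative). -/
structure SignedBigraph (V : Type u) where
  graph : SimpleGraph V
  sign : V → V → Bool
  sign_symm : ∀ a b : V, sign a b = sign b a
  side : V → Bool
  bipartite : ∀ ⦃a b : V⦄, graph.Adj a b → side a ≠ side b

namespace SignedBigraph

variable {V : Type u}

def Adj (G : SignedBigraph V) (a b : V) : Prop := G.graph.Adj a b

/-- `N(ab) = (N(a) ∪ N(b)) - {a, b}`. -/
def edgeNbhd (G : SignedBigraph V) (a b : V) : Set V :=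
  (G.graph.neighborSet a ∪ G.graph.neighborSet b) \ {a, b}

/-- The edge `ab` is signed simplicial: `N(ab)` induces a positive biclique. -/
def SignedSimplicial (G : SignedBigraph V) (a b : V) : Prop :=
  G.Adj a b ∧
    ∀ c ∈ G.edgeNbhd a b, ∀ d ∈ G.edgeNbhd a b,
      G.side c ≠ G.side d → (G.Adj c d ∧ G.sign c d = true)

/-- Delete a set of edges from a signed bigraph (keeping all vertices). -/
def deleteEdges (G : SignedBigraph V) (s : Set (Sym2 V)) : SignedBigraph V where
  graph := G.graph.deleteEdges s
  sign := G.sign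
  sign_symm := G.sign_symm
  side := G.side
  bipartite := by
    intro a b h
    exact G.bipartite (SimpleGraph.deleteEdges_adj.mp h).1

/-- The induced signed subgraph on a set of vertices. -/
def induce (G : SignedBigraph V) (A : Set V) : SignedBigraph A where
  graph := G.graph.induce A
  sign a b := G.sign a b
  sign_symm a b := G.sign_symm a b
  side a := G.side a
  bipartite := by
    intro a b h
    exact G.bipartite h

/-- A chordal signed bigraph: the edges can be ordered `e₁, …, e_m` so that each `eᵢ`
is a signed simplicial edge of the signed bigraph obtained by deleting `e₁, …, e_{i-1}`. -/
def IsChordal (G : SignedBigraph V) : Prop :=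
  ∃ l : List (Sym2 V), l.Nodup ∧ (∀ e, e ∈ G.graph.edgeSet ↔ e ∈ l) ∧
    ∀ (i : ℕ) (h : i < l.length), ∃ a b : V,
      l.get ⟨i, h⟩ = s(a, b) ∧
      (G.deleteEdges {e | e ∈ l.take i}).SignedSimplicial a b

/-! ## Forbidden patterns F₁ – F₆, D, long cycles -/

/-- `G` contains the all-negative 4-cycle `F₁` as an induced subgraph. -/
def HasF1 (G : SignedBigraph V) : Prop :=
  ∃ u1 u2 v1 v2 : V,
    [u1, u2, v1, v2].Pairwise (· ≠ ·) ∧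
    G.Adj u1 v1 ∧ G.Adj u1 v2 ∧ G.Adj u2 v1 ∧ G.Adj u2 v2 ∧
    ¬ G.Adj u1 u2 ∧ ¬ G.Adj v1 v2 ∧
    G.sign u1 v1 = false ∧ G.sign u1 v2 = false ∧
    G.sign u2 v1 = false ∧ G.sign u2 v2 = false

/-- `G` contains a member of `F₂` (a signed `K_{2,3}`) as an induced subgraph. -/
def HasF2 (G : SignedBigraph V) : Prop :=
  ∃ u1 u2 v1 v2 v3 : V,
    [u1, u2, v1, v2, v3].Pairwise (· ≠ ·) ∧
    G.Adj u1 v1 ∧ G.Adj u1 v2 ∧ G.Adj u1 v3 ∧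
    G.Adj u2 v1 ∧ G.Adj u2 v2 ∧ G.Adj u2 v3 ∧
    ¬ G.Adj u1 u2 ∧ ¬ G.Adj v1 v2 ∧ ¬ G.Adj v1 v3 ∧ ¬ G.Adj v2 v3 ∧
    G.sign u1 v1 = false ∧ G.sign u1 v2 = false ∧
    G.sign u2 v2 = false ∧ G.sign u2 v3 = false

/-- `G` contains a member of `F₃` (a signed `K_{2,4}`) as an induced subgraph. -/
def HasF3 (G : SignedBigraph V) : Prop :=
  ∃ u1 u2 v1 v2 v3 v4 : V,
    [u1, u2, v1, v2, v3, v4].Pairwise (· ≠ ·) ∧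
    G.Adj u1 v1 ∧ G.Adj u1 v2 ∧ G.Adj u1 v3 ∧ G.Adj u1 v4 ∧
    G.Adj u2 v1 ∧ G.Adj u2 v2 ∧ G.Adj u2 v3 ∧ G.Adj u2 v4 ∧
    ¬ G.Adj u1 u2 ∧ ¬ G.Adj v1 v2 ∧ ¬ G.Adj v1 v3 ∧ ¬ G.Adj v1 v4 ∧
    ¬ G.Adj v2 v3 ∧ ¬ G.Adj v2 v4 ∧ ¬ G.Adj v3 v4 ∧
    G.sign u1 v1 = false ∧ G.sign u1 v2 = false ∧
    G.sign u2 v3 = false ∧ G.sign u2 v4 = false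

/-- `G` contains a member of `F₄` (a signed `K_{3,3}` with negative perfect matching)
as an induced subgraph. -/
def HasF4 (G : SignedBigraph V) : Prop :=
  ∃ u1 u2 u3 v1 v2 v3 : V,
    [u1, u2, u3, v1, v2, v3].Pairwise (· ≠ ·) ∧
    G.Adj u1 v1 ∧ G.Adj u1 v2 ∧ G.Adj u1 v3 ∧
    G.Adj u2 v1 ∧ G.Adj u2 v2 ∧ G.Adj u2 v3 ∧
    G.Adj u3 v1 ∧ G.Adj u3 v2 ∧ G.Adj u3 v3 ∧
    ¬ G.Adj u1 u2 ∧ ¬ G.Adj u1 u3 ∧ ¬ G.Adj u2 u3 ∧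
    ¬ G.Adj v1 v2 ∧ ¬ G.Adj v1 v3 ∧ ¬ G.Adj v2 v3 ∧
    G.sign u1 v1 = false ∧ G.sign u2 v2 = false ∧ G.sign u3 v3 = false

/-- `G` contains a member of `F₅` as an induced subgraph. -/
def HasF5 (G : SignedBigraph V) : Prop :=
  ∃ x1 x2 x3 y1 y2 y3 : V,
    [x1, x2, x3, y1, y2, y3].Pairwise (· ≠ ·) ∧
    G.Adj x1 y1 ∧ G.Adj x1 y2 ∧ ¬ G.Adj x1 y3 ∧
    G.Adj x2 y1 ∧ G.Adj x2 y2 ∧ G.Adj x2 y3 ∧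
    G.Adj x3 y1 ∧ G.Adj x3 y2 ∧ G.Adj x3 y3 ∧
    ¬ G.Adj x1 x2 ∧ ¬ G.Adj x1 x3 ∧ ¬ G.Adj x2 x3 ∧
    ¬ G.Adj y1 y2 ∧ ¬ G.Adj y1 y3 ∧ ¬ G.Adj y2 y3 ∧
    G.sign x2 y1 = false ∧ G.sign x3 y2 = false

/-- `G` contains a member of `F₆` as an induced subgraph. -/
def HasF6 (G : SignedBigraph V) : Prop :=
  ∃ x1 x2 x3 x4 y1 y2 y3 y4 : V,
    [x1, x2, x3, x4, y1, y2, y3, y4].Pairwise (· ≠ ·) ∧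
    G.Adj x1 y1 ∧ G.Adj x1 y2 ∧ ¬ G.Adj x1 y3 ∧ ¬ G.Adj x1 y4 ∧
    G.Adj x2 y1 ∧ G.Adj x2 y2 ∧ ¬ G.Adj x2 y3 ∧ ¬ G.Adj x2 y4 ∧
    G.Adj x3 y1 ∧ G.Adj x3 y2 ∧ G.Adj x3 y3 ∧ G.Adj x3 y4 ∧
    G.Adj x4 y1 ∧ G.Adj x4 y2 ∧ G.Adj x4 y3 ∧ G.Adj x4 y4 ∧
    ¬ G.Adj x1 x2 ∧ ¬ G.Adj x1 x3 ∧ ¬ G.Adj x1 x4 ∧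
    ¬ G.Adj x2 x3 ∧ ¬ G.Adj x2 x4 ∧ ¬ G.Adj x3 x4 ∧
    ¬ G.Adj y1 y2 ∧ ¬ G.Adj y1 y3 ∧ ¬ G.Adj y1 y4 ∧
    ¬ G.Adj y2 y3 ∧ ¬ G.Adj y2 y4 ∧ ¬ G.Adj y3 y4 ∧
    G.sign x1 y1 = false ∧ G.sign x2 y1 = false ∧ G.sign x3 y2 = false ∧
    G.sign x4 y3 = false ∧ G.sign x4 y4 = false

/-- `G` contains a member of `D` (a 6-cycle `x₁y₁x₂y₃x₃y₂x₁` plus a negative chord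
`x₂y₂`) as an induced subgraph. -/
def HasD (G : SignedBigraph V) : Prop :=
  ∃ x1 x2 x3 y1 y2 y3 : V,
    [x1, x2, x3, y1, y2, y3].Pairwise (· ≠ ·) ∧
    G.Adj x1 y1 ∧ G.Adj y1 x2 ∧ G.Adj x2 y3 ∧ G.Adj y3 x3 ∧
    G.Adj x3 y2 ∧ G.Adj y2 x1 ∧
    G.Adj x2 y2 ∧ G.sign x2 y2 = false ∧
    ¬ G.Adj x1 y3 ∧ ¬ G.Adj x3 y1 ∧
    ¬ G.Adj x1 x2 ∧ ¬ G.Adj x1 x3 ∧ ¬ G.Adj x2 x3 ∧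
    ¬ G.Adj y1 y2 ∧ ¬ G.Adj y1 y3 ∧ ¬ G.Adj y2 y3

/-- `G` contains an induced signed cycle of length at least 6. -/
def HasLongCycle (G : SignedBigraph V) : Prop :=
  HasLongInducedCycle G.graph

/-! ## Minimal forbidden patterns M₁ – M₅ for complete bigraphs -/

def HasM1 (G : SignedBigraph V) : Prop := G.HasF1

def HasM2 (G : SignedBigraph V) : Prop :=
  ∃ u1 u2 v1 v2 v3 : V,
    [u1, u2, v1, v2, v3].Pairwise (· ≠ ·) ∧
    G.Adj u1 v1 ∧ G.Adj u1 v2 ∧ G.Adj u1 v3 ∧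
    G.Adj u2 v1 ∧ G.Adj u2 v2 ∧ G.Adj u2 v3 ∧
    ¬ G.Adj u1 u2 ∧ ¬ G.Adj v1 v2 ∧ ¬ G.Adj v1 v3 ∧ ¬ G.Adj v2 v3 ∧
    G.sign u1 v1 = false ∧ G.sign u1 v2 = false ∧
    G.sign u2 v2 = false ∧ G.sign u2 v3 = false ∧
    G.sign u1 v3 = true ∧ G.sign u2 v1 = true

def HasM3 (G : SignedBigraph V) : Prop :=
  ∃ u1 u2 v1 v2 v3 v4 : V,
    [u1, u2, v1, v2, v3, v4].Pairwise (· ≠ ·) ∧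
    G.Adj u1 v1 ∧ G.Adj u1 v2 ∧ G.Adj u1 v3 ∧ G.Adj u1 v4 ∧
    G.Adj u2 v1 ∧ G.Adj u2 v2 ∧ G.Adj u2 v3 ∧ G.Adj u2 v4 ∧
    ¬ G.Adj u1 u2 ∧ ¬ G.Adj v1 v2 ∧ ¬ G.Adj v1 v3 ∧ ¬ G.Adj v1 v4 ∧
    ¬ G.Adj v2 v3 ∧ ¬ G.Adj v2 v4 ∧ ¬ G.Adj v3 v4 ∧
    G.sign u1 v1 = false ∧ G.sign u1 v2 = false ∧
    G.sign u2 v3 = false ∧ G.sign u2 v4 = false ∧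
    G.sign u1 v3 = true ∧ G.sign u1 v4 = true ∧
    G.sign u2 v1 = true ∧ G.sign u2 v2 = true

def HasM4 (G : SignedBigraph V) : Prop :=
  ∃ u1 u2 u3 v1 v2 v3 : V,
    [u1, u2, u3, v1, v2, v3].Pairwise (· ≠ ·) ∧
    G.Adj u1 v1 ∧ G.Adj u1 v2 ∧ G.Adj u1 v3 ∧
    G.Adj u2 v1 ∧ G.Adj u2 v2 ∧ G.Adj u2 v3 ∧
    G.Adj u3 v1 ∧ G.Adj u3 v2 ∧ G.Adj u3 v3 ∧
    ¬ G.Adj u1 u2 ∧ ¬ G.Adj u1 u3 ∧ ¬ G.Adj u2 u3 ∧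
    ¬ G.Adj v1 v2 ∧ ¬ G.Adj v1 v3 ∧ ¬ G.Adj v2 v3 ∧
    G.sign u1 v1 = false ∧ G.sign u2 v2 = false ∧ G.sign u3 v3 = false ∧
    G.sign u1 v2 = true ∧ G.sign u1 v3 = true ∧ G.sign u2 v1 = true ∧
    G.sign u2 v3 = true ∧ G.sign u3 v1 = true ∧ G.sign u3 v2 = true

def HasM5 (G : SignedBigraph V) : Prop :=
  ∃ x1 x2 x3 y1 y2 y3 : V,
    [x1, x2, x3, y1, y2, y3].Pairwise (· ≠ ·) ∧
    G.Adj x1 y1 ∧ G.Adj x1 y2 ∧ G.Adj x1 y3 ∧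
    G.Adj x2 y1 ∧ G.Adj x2 y2 ∧ G.Adj x2 y3 ∧
    G.Adj x3 y1 ∧ G.Adj x3 y2 ∧ G.Adj x3 y3 ∧
    ¬ G.Adj x1 x2 ∧ ¬ G.Adj x1 x3 ∧ ¬ G.Adj x2 x3 ∧
    ¬ G.Adj y1 y2 ∧ ¬ G.Adj y1 y3 ∧ ¬ G.Adj y2 y3 ∧
    G.sign x1 y1 = false ∧ G.sign x1 y2 = false ∧
    G.sign x2 y2 = false ∧ G.sign x3 y3 = false ∧
    G.sign x1 y3 = true ∧ G.sign x2 y1 = true ∧ G.sign x2 y3 = true ∧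
    G.sign x3 y1 = true ∧ G.sign x3 y2 = true

/-! ## The patterns W₁ – W₆ (relativized to an ambient vertex set `A`, with the
distinguished vertices being exactly the vertices in `S`). -/

def HasW1In (G : SignedBigraph V) (A S : Set V) : Prop :=
  ∃ u y x z : V, u ∈ A ∧ y ∈ A ∧ x ∈ A ∧ z ∈ A ∧
    [u, y, x, z].Pairwise (· ≠ ·) ∧
    G.Adj u y ∧ G.Adj u z ∧ G.Adj x y ∧ G.Adj x z ∧
    ¬ G.Adj u x ∧ ¬ G.Adj y z ∧
    G.sign x y = false ∧ G.sign x z = false ∧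
    x ∈ S ∧ u ∉ S ∧ y ∉ S ∧ z ∉ S

def HasW2In (G : SignedBigraph V) (A S : Set V) : Prop :=
  ∃ u y v z p : V, u ∈ A ∧ y ∈ A ∧ v ∈ A ∧ z ∈ A ∧ p ∈ A ∧
    [u, y, v, z, p].Pairwise (· ≠ ·) ∧
    G.Adj u y ∧ G.Adj u z ∧ G.Adj v y ∧ G.Adj v z ∧ G.Adj p v ∧
    ¬ G.Adj u v ∧ ¬ G.Adj y z ∧ ¬ G.Adj p u ∧ ¬ G.Adj p y ∧ ¬ G.Adj p z ∧
    G.sign v y = false ∧ G.sign v z = false ∧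
    p ∈ S ∧ u ∉ S ∧ y ∉ S ∧ v ∉ S ∧ z ∉ S

def HasW3In (G : SignedBigraph V) (A S : Set V) : Prop :=
  ∃ u y v z p : V, u ∈ A ∧ y ∈ A ∧ v ∈ A ∧ z ∈ A ∧ p ∈ A ∧
    [u, y, v, z, p].Pairwise (· ≠ ·) ∧
    G.Adj u y ∧ G.Adj u z ∧ G.Adj v y ∧ G.Adj v z ∧ G.Adj p v ∧ G.Adj p u ∧
    ¬ G.Adj u v ∧ ¬ G.Adj y z ∧ ¬ G.Adj p y ∧ ¬ G.Adj p z ∧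
    G.sign v y = false ∧ G.sign v z = false ∧ G.sign p u = false ∧
    p ∈ S ∧ u ∉ S ∧ y ∉ S ∧ v ∉ S ∧ z ∉ S

def HasW4In (G : SignedBigraph V) (A S : Set V) : Prop :=
  ∃ u y c z p q : V, u ∈ A ∧ y ∈ A ∧ c ∈ A ∧ z ∈ A ∧ p ∈ A ∧ q ∈ A ∧
    [u, y, c, z, p, q].Pairwise (· ≠ ·) ∧
    G.Adj u y ∧ G.Adj u z ∧ G.Adj c y ∧ G.Adj c z ∧ G.Adj p c ∧ G.Adj p u ∧
    G.Adj q p ∧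
    ¬ G.Adj u c ∧ ¬ G.Adj y z ∧ ¬ G.Adj p y ∧ ¬ G.Adj p z ∧
    ¬ G.Adj q u ∧ ¬ G.Adj q y ∧ ¬ G.Adj q c ∧ ¬ G.Adj q z ∧
    G.sign c y = false ∧ G.sign c z = false ∧ G.sign p u = false ∧
    q ∈ S ∧ u ∉ S ∧ y ∉ S ∧ c ∉ S ∧ z ∉ S ∧ p ∉ S

def HasW5In (G : SignedBigraph V) (A S : Set V) : Prop :=
  ∃ u y v z x : V, u ∈ A ∧ y ∈ A ∧ v ∈ A ∧ z ∈ A ∧ x ∈ A ∧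
    [u, y, v, z, x].Pairwise (· ≠ ·) ∧
    G.Adj u y ∧ G.Adj u z ∧ G.Adj v y ∧ G.Adj v z ∧ G.Adj x v ∧ G.Adj x u ∧
    ¬ G.Adj u v ∧ ¬ G.Adj y z ∧ ¬ G.Adj x y ∧ ¬ G.Adj x z ∧
    G.sign v y = false ∧ G.sign x u = false ∧
    x ∈ S ∧ y ∈ S ∧ u ∉ S ∧ v ∉ S ∧ z ∉ S

def HasW6In (G : SignedBigraph V) (A S : Set V) : Prop :=
  ∃ u y v z x : V, u ∈ A ∧ y ∈ A ∧ v ∈ A ∧ z ∈ A ∧ x ∈ A ∧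
    [u, y, v, z, x].Pairwise (· ≠ ·) ∧
    G.Adj u y ∧ G.Adj u z ∧ G.Adj v y ∧ G.Adj v z ∧ G.Adj x v ∧
    ¬ G.Adj u v ∧ ¬ G.Adj y z ∧ ¬ G.Adj x u ∧ ¬ G.Adj x y ∧ ¬ G.Adj x z ∧
    G.sign v y = false ∧
    x ∈ S ∧ y ∈ S ∧ u ∉ S ∧ v ∉ S ∧ z ∉ S

/-! ## Tadpoles, sums and joins -/

/-- The vertex set of a tadpole with heads `w, y, z` and path vertices `x`. -/
def tadVerts {n : ℕ} (w y z : V) (x : Fin n → V) : Set V :=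
  {w, y, z} ∪ Set.range x

/-- The data `(w, y, z, x)` forms an induced tadpole in `G`:
`w, y, z, x ⟨k⟩` induce a 4-cycle whose edges `x ⟨k⟩ y` and `x ⟨k⟩ z` are negative,
together with the induced path `x ⟨k⟩, x ⟨k-1⟩, …, x 0`; the vertex `x 0` is the end
and `w, y, z` are the heads.  If `t2 = true` the tadpole is of type 2: there is
additionally a negative edge from `w` to `x ⟨k-1⟩`.
(The paper's parameter `k ≥ 1` corresponds to `k + 1` here.) -/
structure IsInducedTadpole (G : SignedBigraph V) (k : ℕ) (t2 : Bool)
    (w y z : V) (x : Fin (k + 1) → V) : Prop where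
  t2_len : t2 = true → 1 ≤ k
  inj : Function.Injective x
  w_notmem : ∀ i, w ≠ x i
  y_notmem : ∀ i, y ≠ x i
  z_notmem : ∀ i, z ≠ x i
  wy : w ≠ y
  wz : w ≠ z
  yz : y ≠ z
  adj_wy : G.Adj w y
  adj_wz : G.Adj w z
  not_adj_yz : ¬ G.Adj y z
  adj_path : ∀ i j : Fin (k + 1), G.Adj (x i) (x j) ↔ (i.1 + 1 = j.1 ∨ j.1 + 1 = i.1)
  adj_y : ∀ i : Fin (k + 1), G.Adj y (x i) ↔ i.1 = k
  adj_z : ∀ i : Fin (k + 1), G.Adj z (x i) ↔ i.1 = k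
  adj_w : ∀ i : Fin (k + 1), G.Adj w (x i) ↔ (t2 = true ∧ i.1 + 1 = k)
  sign_y : ∀ i : Fin (k + 1), i.1 = k → G.sign (x i) y = false
  sign_z : ∀ i : Fin (k + 1), i.1 = k → G.sign (x i) z = false
  sign_w : ∀ i : Fin (k + 1), t2 = true → i.1 + 1 = k → G.sign w (x i) = false

/-- `G` contains a sum of two tadpoles (identified at their ends) as an induced
subgraph. -/
def HasTadpoleSum (G : SignedBigraph V) : Prop :=
  ∃ (k k' : ℕ) (t t' : Bool) (w y z w' y' z' : V)
    (x : Fin (k + 1) → V) (x' : Fin (k' + 1) → V),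
    G.IsInducedTadpole k t w y z x ∧ G.IsInducedTadpole k' t' w' y' z' x' ∧
    x 0 = x' 0 ∧
    tadVerts w y z x ∩ tadVerts w' y' z' x' = {x 0} ∧
    ∀ a ∈ tadVerts w y z x, ∀ b ∈ tadVerts w' y' z' x',
      a ≠ x 0 → b ≠ x' 0 → ¬ G.Adj a b

/-- `G` contains a join of two tadpoles as an induced subgraph: two disjoint induced
tadpoles such that the edges between them are exactly those joining the end of each
tadpole to all vertices of the other tadpole in the opposite partite set; all these
edges are positive, except that the edge from an end to the head `w` of the other
tadpole may be of either sign when that tadpole is a member of `W₁` (i.e. has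
`k = 0` and is of type 1), in which case the ends are required to be adjacent. -/
def HasTadpoleJoin (G : SignedBigraph V) : Prop :=
  ∃ (k k' : ℕ) (t t' : Bool) (w y z w' y' z' : V)
    (x : Fin (k + 1) → V) (x' : Fin (k' + 1) → V),
    G.IsInducedTadpole k t w y z x ∧ G.IsInducedTadpole k' t' w' y' z' x' ∧
    Disjoint (tadVerts w y z x) (tadVerts w' y' z' x') ∧
    (∀ a ∈ tadVerts w y z x, ∀ b ∈ tadVerts w' y' z' x',
      (G.Adj a b ↔ ((a = x 0 ∨ b = x' 0) ∧ G.side a ≠ G.side b))) ∧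
    ((k = 0 ∧ t = false) ∨ (k' = 0 ∧ t' = false) → G.side (x 0) ≠ G.side (x' 0)) ∧
    (∀ a ∈ tadVerts w y z x, ∀ b ∈ tadVerts w' y' z' x', G.Adj a b →
      ¬ (a = x 0 ∧ b = w' ∧ k' = 0 ∧ t' = false) →
      ¬ (a = w ∧ b = x' 0 ∧ k = 0 ∧ t = false) →
      G.sign a b = true)

/-- `G` contains a member of
`ℱ = F₁ ∪ F₂ ∪ F₃ ∪ F₄ ∪ F₅ ∪ F₆ ∪ 𝒞 ∪ D ∪ 𝒮 ∪ 𝒥` as an induced subgraph. -/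
def HasForbidden (G : SignedBigraph V) : Prop :=
  G.HasF1 ∨ G.HasF2 ∨ G.HasF3 ∨ G.HasF4 ∨ G.HasF5 ∨ G.HasF6 ∨
  G.HasLongCycle ∨ G.HasD ∨ G.HasTadpoleSum ∨ G.HasTadpoleJoin

/-- `G` is `ℱ`-free. -/
def FFree (G : SignedBigraph V) : Prop := ¬ G.HasForbidden

end SignedBigraph

/-! ## Concrete complete signed bipartite graphs (for the graphs M₁ – M₅) -/

/-- The complete bipartite graph on `Fin a ⊕ Fin b`. -/
def cbsGraph (a b : ℕ) : SimpleGraph (Fin a ⊕ Fin b) where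
  Adj u v := u.isLeft ≠ v.isLeft
  symm := ⟨fun _ _ h => Ne.symm h⟩
  loopless := ⟨fun _ h => h rfl⟩

def cbsSign {a b : ℕ} (sgn : Fin a → Fin b → Bool) :
    Fin a ⊕ Fin b → Fin a ⊕ Fin b → Bool
  | Sum.inl i, Sum.inr j => sgn i j
  | Sum.inr j, Sum.inl i => sgn i j
  | _, _ => true

/-- The complete signed bipartite graph with parts `Fin a`, `Fin b`, and signs given
by `sgn`. -/
def completeSignedBigraph (a b : ℕ) (sgn : Fin a → Fin b → Bool) :
    SignedBigraph (Fin a ⊕ Fin b) where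
  graph := cbsGraph a b
  sign := cbsSign sgn
  sign_symm := by
    intro u v
    cases u <;> cases v <;> rfl
  side := Sum.isLeft
  bipartite := fun _ _ h => h

/-- `M₁`: the all-negative 4-cycle. -/
def Mgraph1 : SignedBigraph (Fin 2 ⊕ Fin 2) :=
  completeSignedBigraph 2 2 (fun _ _ => false)

/-- `M₂`. -/
def Mgraph2 : SignedBigraph (Fin 2 ⊕ Fin 3) :=
  completeSignedBigraph 2 3
    (fun i j => ! decide ((i = 0 ∧ (j = 0 ∨ j = 1)) ∨ (i = 1 ∧ (j = 1 ∨ j = 2))))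

/-- `M₃`. -/
def Mgraph3 : SignedBigraph (Fin 2 ⊕ Fin 4) :=
  completeSignedBigraph 2 4
    (fun i j => ! decide ((i = 0 ∧ (j = 0 ∨ j = 1)) ∨ (i = 1 ∧ (j = 2 ∨ j = 3))))

/-- `M₄`. -/
def Mgraph4 : SignedBigraph (Fin 3 ⊕ Fin 3) :=
  completeSignedBigraph 3 3 (fun i j => ! decide ((i : ℕ) = (j : ℕ)))

/-- `M₅`. -/
def Mgraph5 : SignedBigraph (Fin 3 ⊕ Fin 3) :=
  completeSignedBigraph 3 3
    (fun i j => ! decide ((i = 0 ∧ (j = 0 ∨ j = 1)) ∨ (i = 1 ∧ j = 1) ∨ (i = 2 ∧ j = 2)))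


/-! ## Auxiliary machinery for the proof -/

section Aux

universe v

variable {V : Type u}

lemma mkLongCycle (G : SimpleGraph V) (n : ℕ) (h6 : 6 ≤ n) (g : Fin n → V)
    (inj : Function.Injective g)
    (hadj : ∀ i j : Fin n, G.Adj (g i) (g j) ↔ (((i:ℕ)+1) % n = j ∨ ((j:ℕ)+1) % n = i)) :
    HasLongInducedCycle G := by
  haveI : NeZero n := ⟨by omega⟩
  haveI : Fact (1 < n) := ⟨by omega⟩
  refine ⟨n, h6, fun i => g ⟨i.val, ZMod.val_lt i⟩, ?_, ?_⟩
  · intro a b hab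
    exact ZMod.val_injective n (congrArg Fin.val (inj hab))
  · intro i j
    rw [hadj]
    have key : ∀ a b : ZMod n, (b = a + 1) ↔ ((a.val + 1) % n = b.val) := by
      intro a b
      constructor
      · rintro rfl; rw [ZMod.val_add, ZMod.val_one]
      · intro h
        apply ZMod.val_injective n
        rw [ZMod.val_add, ZMod.val_one, h]
    constructor
    · rintro (h | h)
      · exact Or.inl ((key i j).2 h)
      · exact Or.inr ((key j i).2 h)
    · rintro (h | h)
      · exact Or.inl ((key i j).1 h)
      · exact Or.inr ((key j i).1 h)

private lemma succ_mod {i n : ℕ} (h : i < n) : (i + 1) % n = if i + 1 = n then 0 else i + 1 := by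
  by_cases h1 : i + 1 = n
  · rw [if_pos h1, h1, Nat.mod_self]
  · rw [if_neg h1, Nat.mod_eq_of_lt (by omega)]

/-- Master lemma: an induced path `X m, …, X a` closed up by a chain of extra
vertices `e 0, …, e (r-1)` (with `e 0` adjacent to `X m` and `e (r-1)` to `X a`)
yields an induced cycle of length `(a-m+1)+r`. -/
lemma cycleFalse (G : SimpleGraph V) (hnc : ¬ HasLongInducedCycle G)
    (k : ℕ) (X : ℕ → V)
    (injX : ∀ i, i ≤ k → ∀ j, j ≤ k → X i = X j → i = j)
    (adjX : ∀ i, i ≤ k → ∀ j, j ≤ k → (G.Adj (X i) (X j) ↔ (i + 1 = j ∨ j + 1 = i)))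
    (m a : ℕ) (hma : m < a) (hak : a ≤ k)
    (r : ℕ) (hr : 1 ≤ r) (e : ℕ → V)
    (h6 : 6 ≤ a - m + 1 + r)
    (inje : ∀ s, s < r → ∀ t, t < r → e s = e t → s = t)
    (hex : ∀ s, s < r → ∀ t, m ≤ t → t ≤ a → e s ≠ X t)
    (echain : ∀ s, s < r → ∀ t, t < r → (G.Adj (e s) (e t) ↔ (s + 1 = t ∨ t + 1 = s)))
    (hend0 : G.Adj (e 0) (X m))
    (hendR : G.Adj (e (r-1)) (X a))
    (hmiss : ∀ s, s < r → ∀ t, m ≤ t → t ≤ a → ¬(s = 0 ∧ t = m) → ¬(s = r - 1 ∧ t = a) →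
      ¬ G.Adj (e s) (X t)) : False := by
  set n := a - m + 1 + r with hn
  apply hnc
  apply mkLongCycle G n (by omega) (fun i => if (i : ℕ) ≤ a - m then X (m + i) else e (a - m + r - i))
  · -- injectivity
    intro i j hij
    have hij : (if (i:ℕ) ≤ a - m then X (m + (i:ℕ)) else e (a - m + r - (i:ℕ))) =
        (if (j:ℕ) ≤ a - m then X (m + (j:ℕ)) else e (a - m + r - (j:ℕ))) := hij
    split_ifs at hij with h1 h2 h2
    · exact Fin.ext (by have := injX _ (by omega) _ (by omega) hij; omega)
    · exact absurd hij.symm (hex _ (by omega) _ (by omega) (by omega))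
    · exact absurd hij (hex _ (by omega) _ (by omega) (by omega))
    · exact Fin.ext (by have := inje _ (by omega) _ (by omega) hij; omega)
  · -- adjacency
    intro i j
    have hi := i.isLt
    have hj := j.isLt
    split_ifs with h1 h2 h2
    · rw [adjX _ (by omega) _ (by omega), succ_mod (by omega : (i:ℕ) < n),
        succ_mod (by omega : (j:ℕ) < n)]
      split_ifs <;> omega
    · -- i in path, j in extras
      rw [G.adj_comm]
      have hs : a - m + r - (j:ℕ) < r := by omega
      rw [succ_mod (by omega : (i:ℕ) < n), succ_mod (by omega : (j:ℕ) < n)]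
      constructor
      · intro had
        by_contra hcon
        push_neg at hcon
        refine hmiss _ hs _ (by omega) (by omega) ?_ ?_ had
        · rintro ⟨hs0, ht0⟩
          -- s = 0 means j = a-m+r = n-1 ; t = m means i = 0
          split_ifs at hcon <;> omega
        · rintro ⟨hsR, htR⟩
          split_ifs at hcon <;> omega
      · intro hcon
        split_ifs at hcon with p1 p2
        · -- i+1 = n impossible since i ≤ a-m < n-1
          rcases hcon with h | h
          · omega
          · -- j+1 = n : so j = n-1, e-index 0, and 0 = i: t = m + 0
            have : (i:ℕ) = 0 ∧ (j:ℕ) = n - 1 := by omega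
            have hj' : a - m + r - (j:ℕ) = 0 := by omega
            rw [hj', this.1]
            simpa using hend0
        · rcases hcon with h | h
          · -- i+1 = j : i = a-m, j = a-m+1 : e-index r-1, t = a
            have : (i:ℕ) = a - m ∧ (j:ℕ) = a - m + 1 := by omega
            have hj' : a - m + r - (j:ℕ) = r - 1 := by omega
            rw [hj', this.1]
            have : m + (a - m) = a := by omega
            rw [this]
            exact hendR
          · omega
        · rcases hcon with h | h
          · have hj' : a - m + r - (j:ℕ) = r - 1 := by omega
            have hi' : (i:ℕ) = a - m := by omega
            rw [hj', hi']
            have hma' : m + (a - m) = a := by omega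
            rw [hma']
            exact hendR
          · have : (i:ℕ) = 0 ∧ (j:ℕ) = n - 1 := by omega
            have hj' : a - m + r - (j:ℕ) = 0 := by omega
            rw [hj', this.1]
            simpa using hend0
        · rcases hcon with h | h
          · have : (i:ℕ) = a - m ∧ (j:ℕ) = a - m + 1 := by omega
            have hj' : a - m + r - (j:ℕ) = r - 1 := by omega
            rw [hj', this.1]
            have hma' : m + (a - m) = a := by omega
            rw [hma']
            exact hendR
          · omega
    · -- i in extras, j in path : symmetric
      have hs : a - m + r - (i:ℕ) < r := by omega
      rw [succ_mod (by omega : (i:ℕ) < n), succ_mod (by omega : (j:ℕ) < n)]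
      constructor
      · intro had
        by_contra hcon
        push_neg at hcon
        refine hmiss _ hs _ (by omega) (by omega) ?_ ?_ had
        · rintro ⟨hs0, ht0⟩
          split_ifs at hcon <;> omega
        · rintro ⟨hsR, htR⟩
          split_ifs at hcon <;> omega
      · intro hcon
        split_ifs at hcon with p1 p2
        · -- p1 : i+1 = n, p2 : j+1 = n : p2 impossible
          omega
        · -- p1 : i+1 = n (so i = n-1)
          rcases hcon with h | h
          · -- 0 = j : wrap edge e 0 -- X m
            have hi' : a - m + r - (i:ℕ) = 0 := by omega
            rw [hi', show (j:ℕ) = 0 from h.symm]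
            simpa using hend0
          · -- j+1 = i : forces r = 1
            have hi' : a - m + r - (i:ℕ) = r - 1 := by omega
            rw [hi']
            have hma' : m + (j:ℕ) = a := by omega
            rw [hma']
            exact hendR
        · -- p2 : j+1 = n impossible
          omega
        · rcases hcon with h | h
          · omega
          · have hi' : a - m + r - (i:ℕ) = r - 1 := by omega
            rw [hi']
            have hma' : m + (j:ℕ) = a := by omega
            rw [hma']
            exact hendR
    · -- both extras
      have hsi : a - m + r - (i:ℕ) < r := by omega
      have hsj : a - m + r - (j:ℕ) < r := by omega
      rw [echain _ hsi _ hsj, succ_mod (by omega : (i:ℕ) < n),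
        succ_mod (by omega : (j:ℕ) < n)]
      split_ifs <;> omega


/-- ℕ-indexed access to the tadpole path. -/
def tadX {V : Type u} (k : ℕ) (x : Fin (k + 1) → V) : ℕ → V :=
  fun i => x ⟨min i k, by omega⟩

lemma tadX_eq {V : Type u} {k : ℕ} {x : Fin (k + 1) → V} (i : ℕ) (h : i ≤ k) :
    tadX k x i = x ⟨i, by omega⟩ := by
  simp only [tadX, Nat.min_eq_left h]

lemma tadX_zero {V : Type u} {k : ℕ} {x : Fin (k + 1) → V} : tadX k x 0 = x 0 := by
  exact congrArg x (Fin.ext (by simp))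

private lemma bool3 : ∀ a b c : Bool, a ≠ b → c ≠ b → a = c := by decide

private lemma bool2 : ∀ a b : Bool, a ≠ b → a = !b := by decide

section TadFacts

variable {V : Type u} {G : SignedBigraph V} {k : ℕ} {t2 : Bool} {w y z : V}
  {x : Fin (k + 1) → V}

namespace SignedBigraph.IsInducedTadpole

theorem injX (hT : G.IsInducedTadpole k t2 w y z x) :
    ∀ i, i ≤ k → ∀ j, j ≤ k → tadX k x i = tadX k x j → i = j := by
  intro i hi j hj h
  rw [tadX_eq i hi, tadX_eq j hj] at h
  simpa using congrArg Fin.val (hT.inj h)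

theorem adjX (hT : G.IsInducedTadpole k t2 w y z x) :
    ∀ i, i ≤ k → ∀ j, j ≤ k →
      (G.Adj (tadX k x i) (tadX k x j) ↔ (i + 1 = j ∨ j + 1 = i)) := by
  intro i hi j hj
  rw [tadX_eq i hi, tadX_eq j hj]
  exact hT.adj_path ⟨i, by omega⟩ ⟨j, by omega⟩

theorem adjYX (hT : G.IsInducedTadpole k t2 w y z x) :
    ∀ i, i ≤ k → (G.Adj y (tadX k x i) ↔ i = k) := by
  intro i hi
  rw [tadX_eq i hi]
  exact hT.adj_y ⟨i, by omega⟩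

theorem adjZX (hT : G.IsInducedTadpole k t2 w y z x) :
    ∀ i, i ≤ k → (G.Adj z (tadX k x i) ↔ i = k) := by
  intro i hi
  rw [tadX_eq i hi]
  exact hT.adj_z ⟨i, by omega⟩

theorem adjWX (hT : G.IsInducedTadpole k t2 w y z x) :
    ∀ i, i ≤ k → (G.Adj w (tadX k x i) ↔ (t2 = true ∧ i + 1 = k)) := by
  intro i hi
  rw [tadX_eq i hi]
  exact hT.adj_w ⟨i, by omega⟩

theorem signYX (hT : G.IsInducedTadpole k t2 w y z x) :
    G.sign (tadX k x k) y = false := by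
  rw [tadX_eq k le_rfl]
  exact hT.sign_y ⟨k, by omega⟩ rfl

theorem signZX (hT : G.IsInducedTadpole k t2 w y z x) :
    G.sign (tadX k x k) z = false := by
  rw [tadX_eq k le_rfl]
  exact hT.sign_z ⟨k, by omega⟩ rfl

theorem signWX (hT : G.IsInducedTadpole k t2 w y z x) (ht : t2 = true) :
    ∀ i, i + 1 = k → G.sign w (tadX k x i) = false := by
  intro i hi
  rw [tadX_eq i (by omega)]
  exact hT.sign_w ⟨i, by omega⟩ ht hi

theorem wneX (hT : G.IsInducedTadpole k t2 w y z x) : ∀ i, w ≠ tadX k x i := by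
  intro i; exact hT.w_notmem _

theorem yneX (hT : G.IsInducedTadpole k t2 w y z x) : ∀ i, y ≠ tadX k x i := by
  intro i; exact hT.y_notmem _

theorem zneX (hT : G.IsInducedTadpole k t2 w y z x) : ∀ i, z ≠ tadX k x i := by
  intro i; exact hT.z_notmem _

theorem memX (hT : G.IsInducedTadpole k t2 w y z x) (i : ℕ) :
    tadX k x i ∈ tadVerts w y z x := by
  exact Or.inr ⟨⟨min i k, by omega⟩, rfl⟩

/-- side alternation along the path -/
theorem sideX (hT : G.IsInducedTadpole k t2 w y z x) :
    ∀ i, i ≤ k → G.side (tadX k x i) =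
      (if i % 2 = 0 then G.side (tadX k x 0) else !(G.side (tadX k x 0))) := by
  intro i
  induction i with
  | zero => intro _; simp
  | succ i ih =>
    intro hi
    have h1 := ih (by omega)
    have h2 : G.Adj (tadX k x i) (tadX k x (i + 1)) :=
      (hT.adjX i (by omega) (i+1) hi).2 (Or.inl rfl)
    have h3 : G.side (tadX k x (i+1)) = !(G.side (tadX k x i)) :=
      bool2 _ _ (Ne.symm (G.bipartite h2))
    rw [h3, h1]
    rcases Nat.even_or_odd i with he | ho
    · have e1 : i % 2 = 0 := Nat.even_iff.mp he
      have e2 : (i+1) % 2 ≠ 0 := by omega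
      simp [e1, e2]
    · have e1 : i % 2 ≠ 0 := by have := Nat.odd_iff.mp ho; omega
      have e2 : (i+1) % 2 = 0 := by have := Nat.odd_iff.mp ho; omega
      simp [e1, e2]

theorem sideX_iff (hT : G.IsInducedTadpole k t2 w y z x) :
    ∀ i, i ≤ k → ∀ j, j ≤ k →
      (G.side (tadX k x i) = G.side (tadX k x j) ↔ i % 2 = j % 2) := by
  intro i hi j hj
  rw [hT.sideX i hi, hT.sideX j hj]
  rcases Nat.even_or_odd i with he | ho <;> rcases Nat.even_or_odd j with he' | ho'
  · have := Nat.even_iff.mp he; have := Nat.even_iff.mp he'; simp_all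
  · have := Nat.even_iff.mp he; have := Nat.odd_iff.mp ho'; simp_all
  · have := Nat.odd_iff.mp ho; have := Nat.even_iff.mp he'; simp_all
  · have := Nat.odd_iff.mp ho; have := Nat.odd_iff.mp ho'; simp_all

end SignedBigraph.IsInducedTadpole

end TadFacts

/-- Descent driver. -/
lemma descendAux (P : ℕ → Prop) (jt : ℕ) (htop : P jt)
    (hstep : ∀ j, j + 2 ≤ jt → j % 2 = jt % 2 → P (j + 2) → P j) :
    ∀ j, j ≤ jt → j % 2 = jt % 2 → P j := by
  have H : ∀ d j, j ≤ jt → j % 2 = jt % 2 → jt - j ≤ d → P j := by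
    intro d
    induction d with
    | zero =>
      intro j h1 h2 h3
      have : j = jt := by omega
      exact this ▸ htop
    | succ d ih =>
      intro j h1 h2 h3
      rcases eq_or_lt_of_le h1 with rfl | hlt
      · exact htop
      · have h4 : j + 2 ≤ jt := by omega
        exact hstep j h4 (by omega) (ih (j + 2) (by omega) (by omega) (by omega))
  exact fun j hj hp => H jt j hj hp (by omega)

section Step

variable {V : Type u}

/-- Downward propagation of adjacency of `x'` along the tadpole path. -/
lemma stepDown (G : SignedBigraph V) (hnc : ¬ HasLongInducedCycle G.graph)
    (k : ℕ) (X : ℕ → V)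
    (injX : ∀ i, i ≤ k → ∀ j, j ≤ k → X i = X j → i = j)
    (adjX : ∀ i, i ≤ k → ∀ j, j ≤ k → (G.Adj (X i) (X j) ↔ (i + 1 = j ∨ j + 1 = i)))
    (x' : V) (hx'X : ∀ t, t ≤ k → x' ≠ X t)
    (j : ℕ) (hj2 : j + 2 ≤ k) (hup : G.Adj x' (X (j + 2)))
    (hoff : ∀ t, t ≤ k → t % 2 ≠ j % 2 → ¬ G.Adj x' (X t))
    (hanchor : (j % 2 = 0 ∧ G.Adj x' (X 0)) ∨
      (j % 2 = 1 ∧ ∃ c : V, G.Adj c (X 0) ∧ G.Adj c x' ∧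
        (∀ t, 1 ≤ t → t ≤ k → ¬ G.Adj c (X t)) ∧ c ≠ x' ∧ (∀ t, t ≤ k → c ≠ X t))) :
    G.Adj x' (X j) := by
  by_contra hj
  classical
  by_cases hQ : ∃ i, i < j ∧ G.Adj x' (X i)
  · obtain ⟨i0, hi0j, hi0⟩ := hQ
    set P : ℕ → Prop := fun i => G.Adj x' (X i) with hP
    set m := Nat.findGreatest P (j - 1) with hmdef
    have hm : P m := Nat.findGreatest_spec (m := i0) (by omega) hi0
    have hmax : ∀ t, m < t → t ≤ j - 1 → ¬ P t := fun t h1 h2 =>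
      Nat.findGreatest_is_greatest h1 h2
    have hmle : m ≤ j - 1 := Nat.findGreatest_le _
    have hmp : m % 2 = j % 2 := by
      by_contra hc
      exact hoff m (by omega) hc hm
    have hmj : m + 2 ≤ j := by omega
    refine cycleFalse G.graph hnc k X injX adjX m (j + 2) (by omega) (by omega)
      1 (by omega) (fun _ => x') (by omega) ?_ ?_ ?_ ?_ ?_ ?_
    · intro s hs t ht _; omega
    · intro s hs t h1 h2; exact hx'X t (by omega)
    · intro s hs t ht
      constructor
      · intro h; exact absurd h (G.graph.loopless.irrefl x')
      · omega
    · exact hm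
    · exact hup
    · intro s hs t h1 h2 h3 h4
      have hs0 : s = 0 := by omega
      subst hs0
      rcases Nat.lt_or_ge t j with hlt | hge
      · by_cases hpar : t % 2 = j % 2
        · exact hmax t (by omega) (by omega)
        · exact hoff t (by omega) hpar
      · rcases Nat.lt_or_ge t (j + 1) with h5 | h5
        · have : t = j := by omega
          exact this ▸ hj
        · have : t = j + 1 := by omega
          exact this ▸ hoff (j + 1) (by omega) (by omega)
  · push_neg at hQ
    rcases hanchor with ⟨hpar, h0⟩ | ⟨hpar, c, hc0, hcx, hct, hcnex, hcneX⟩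
    · rcases Nat.eq_zero_or_pos j with rfl | hjpos
      · exact hj h0
      · exact hQ 0 hjpos h0
    · have hj1 : 1 ≤ j := by omega
      refine cycleFalse G.graph hnc k X injX adjX 0 (j + 2) (by omega) (by omega)
        2 (by omega) (fun s => if s = 0 then c else x') (by omega) ?_ ?_ ?_ ?_ ?_ ?_
      · intro s hs t ht h
        rcases Nat.eq_zero_or_pos s with rfl | hs1 <;> rcases Nat.eq_zero_or_pos t with rfl | ht1
        · rfl
        · rw [if_pos rfl, if_neg (by omega)] at h; exact absurd h hcnex
        · rw [if_neg (by omega), if_pos rfl] at h; exact absurd h.symm hcnex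
        · omega
      · intro s hs t h1 h2
        rcases Nat.eq_zero_or_pos s with rfl | hs1
        · rw [if_pos rfl]; exact hcneX t (by omega)
        · rw [if_neg (by omega)]; exact hx'X t (by omega)
      · intro s hs t ht
        rcases Nat.eq_zero_or_pos s with rfl | hs1 <;> rcases Nat.eq_zero_or_pos t with rfl | ht1
        · rw [if_pos rfl]
          exact ⟨fun h => absurd h (G.graph.loopless.irrefl c), fun h => absurd h (by omega)⟩
        · rw [if_pos rfl, if_neg (by omega)]
          exact ⟨fun _ => by omega, fun _ => hcx⟩
        · rw [if_neg (by omega), if_pos rfl]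
          exact ⟨fun _ => by omega, fun _ => (G.graph.adj_comm _ _).mp hcx⟩
        · rw [if_neg (by omega), if_neg (by omega)]
          exact ⟨fun h => absurd h (G.graph.loopless.irrefl x'), fun h => absurd h (by omega)⟩
      · exact hc0
      · exact hup
      · intro s hs t h1 h2 h3 h4
        rcases Nat.eq_zero_or_pos s with rfl | hs1
        · rw [if_pos rfl]
          have ht1 : 1 ≤ t := by
            rcases Nat.eq_zero_or_pos t with rfl | h; · exact absurd ⟨rfl, rfl⟩ h3
            · omega
          exact hct t ht1 (by omega)
        · rw [if_neg (by omega)]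
          rcases Nat.lt_or_ge t j with hlt | hge
          · rcases Nat.eq_zero_or_pos t with rfl | htpos
            · exact hoff 0 (by omega) (by omega)
            · by_cases hpar' : t % 2 = j % 2
              · exact hQ t hlt
              · exact hoff t (by omega) hpar'
          · rcases Nat.lt_or_ge t (j + 1) with h5 | h5
            · have : t = j := by omega
              exact this ▸ hj
            · have : t = j + 1 := by omega
              exact this ▸ hoff (j + 1) (by omega) (by omega)

end Step



lemma pairwise6 {α : Type u} (a b c d e f : α) (h1 : a≠b) (h2 : a≠c) (h3 : a≠d) (h4 : a≠e)
    (h5 : a≠f) (h6 : b≠c) (h7 : b≠d) (h8 : b≠e) (h9 : b≠f) (h10 : c≠d) (h11 : c≠e)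
    (h12 : c≠f) (h13 : d≠e) (h14 : d≠f) (h15 : e≠f) :
    [a,b,c,d,e,f].Pairwise (· ≠ ·) := by
  simp [List.pairwise_cons, *]

section Mk

variable {V : Type u} (G : SignedBigraph V)

lemma nadj_of_side {u v : V} (h : G.side u = G.side v) : ¬ G.Adj u v :=
  fun ha => G.bipartite ha h

lemma mkD (x1 x2 x3 y1 y2 y3 : V)
    (hx12 : x1 ≠ x2) (hx13 : x1 ≠ x3) (hx23 : x2 ≠ x3)
    (hy12 : y1 ≠ y2) (hy13 : y1 ≠ y3) (hy23 : y2 ≠ y3)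
    (hs2 : G.side x2 = G.side x1) (hs3 : G.side x3 = G.side x1)
    (ht2 : G.side y2 = G.side y1) (ht3 : G.side y3 = G.side y1)
    (a11 : G.Adj x1 y1) (a12 : G.Adj y1 x2) (a23 : G.Adj x2 y3) (a33 : G.Adj y3 x3)
    (a32 : G.Adj x3 y2) (a21 : G.Adj y2 x1) (ach : G.Adj x2 y2)
    (sch : G.sign x2 y2 = false) (n13 : ¬ G.Adj x1 y3) (n31 : ¬ G.Adj x3 y1) :
    G.HasD := by
  have hside : G.side x1 ≠ G.side y1 := G.bipartite a11
  have nxy : ∀ u v : V, G.side u = G.side x1 → G.side v = G.side y1 → u ≠ v := by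
    intro u v h1 h2 he
    apply hside
    rw [← h1, ← h2, he]
  exact ⟨x1, x2, x3, y1, y2, y3,
    pairwise6 _ _ _ _ _ _ hx12 hx13 (nxy x1 y1 rfl rfl) (nxy x1 y2 rfl ht2)
      (nxy x1 y3 rfl ht3) hx23 (nxy x2 y1 hs2 rfl) (nxy x2 y2 hs2 ht2) (nxy x2 y3 hs2 ht3)
      (nxy x3 y1 hs3 rfl) (nxy x3 y2 hs3 ht2) (nxy x3 y3 hs3 ht3) hy12 hy13 hy23,
    a11, a12, a23, a33, a32, a21, ach, sch, n13, n31,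
    nadj_of_side G hs2.symm, nadj_of_side G hs3.symm,
    nadj_of_side G (hs2.trans hs3.symm), nadj_of_side G ht2.symm,
    nadj_of_side G ht3.symm, nadj_of_side G (ht2.trans ht3.symm)⟩

lemma mkF5 (x1 x2 x3 y1 y2 y3 : V)
    (hx12 : x1 ≠ x2) (hx13 : x1 ≠ x3) (hx23 : x2 ≠ x3)
    (hy12 : y1 ≠ y2) (hy13 : y1 ≠ y3) (hy23 : y2 ≠ y3)
    (hs2 : G.side x2 = G.side x1) (hs3 : G.side x3 = G.side x1)
    (ht2 : G.side y2 = G.side y1) (ht3 : G.side y3 = G.side y1)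
    (a11 : G.Adj x1 y1) (a12 : G.Adj x1 y2) (n13 : ¬ G.Adj x1 y3)
    (a21 : G.Adj x2 y1) (a22 : G.Adj x2 y2) (a23 : G.Adj x2 y3)
    (a31 : G.Adj x3 y1) (a32 : G.Adj x3 y2) (a33 : G.Adj x3 y3)
    (s21 : G.sign x2 y1 = false) (s32 : G.sign x3 y2 = false) :
    G.HasF5 := by
  have hside : G.side x1 ≠ G.side y1 := G.bipartite a11
  have nxy : ∀ u v : V, G.side u = G.side x1 → G.side v = G.side y1 → u ≠ v := by
    intro u v h1 h2 he
    apply hside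
    rw [← h1, ← h2, he]
  exact ⟨x1, x2, x3, y1, y2, y3,
    pairwise6 _ _ _ _ _ _ hx12 hx13 (nxy x1 y1 rfl rfl) (nxy x1 y2 rfl ht2)
      (nxy x1 y3 rfl ht3) hx23 (nxy x2 y1 hs2 rfl) (nxy x2 y2 hs2 ht2) (nxy x2 y3 hs2 ht3)
      (nxy x3 y1 hs3 rfl) (nxy x3 y2 hs3 ht2) (nxy x3 y3 hs3 ht3) hy12 hy13 hy23,
    a11, a12, n13, a21, a22, a23, a31, a32, a33,
    nadj_of_side G hs2.symm, nadj_of_side G hs3.symm,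
    nadj_of_side G (hs2.trans hs3.symm), nadj_of_side G ht2.symm,
    nadj_of_side G ht3.symm, nadj_of_side G (ht2.trans ht3.symm), s21, s32⟩

lemma mkF4 (u1 u2 u3 v1 v2 v3 : V)
    (hx12 : u1 ≠ u2) (hx13 : u1 ≠ u3) (hx23 : u2 ≠ u3)
    (hy12 : v1 ≠ v2) (hy13 : v1 ≠ v3) (hy23 : v2 ≠ v3)
    (hs2 : G.side u2 = G.side u1) (hs3 : G.side u3 = G.side u1)
    (ht2 : G.side v2 = G.side v1) (ht3 : G.side v3 = G.side v1)
    (a11 : G.Adj u1 v1) (a12 : G.Adj u1 v2) (a13 : G.Adj u1 v3)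
    (a21 : G.Adj u2 v1) (a22 : G.Adj u2 v2) (a23 : G.Adj u2 v3)
    (a31 : G.Adj u3 v1) (a32 : G.Adj u3 v2) (a33 : G.Adj u3 v3)
    (s11 : G.sign u1 v1 = false) (s22 : G.sign u2 v2 = false) (s33 : G.sign u3 v3 = false) :
    G.HasF4 := by
  have hside : G.side u1 ≠ G.side v1 := G.bipartite a11
  have nxy : ∀ u v : V, G.side u = G.side u1 → G.side v = G.side v1 → u ≠ v := by
    intro u v h1 h2 he
    apply hside
    rw [← h1, ← h2, he]
  exact ⟨u1, u2, u3, v1, v2, v3,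
    pairwise6 _ _ _ _ _ _ hx12 hx13 (nxy u1 v1 rfl rfl) (nxy u1 v2 rfl ht2)
      (nxy u1 v3 rfl ht3) hx23 (nxy u2 v1 hs2 rfl) (nxy u2 v2 hs2 ht2) (nxy u2 v3 hs2 ht3)
      (nxy u3 v1 hs3 rfl) (nxy u3 v2 hs3 ht2) (nxy u3 v3 hs3 ht3) hy12 hy13 hy23,
    a11, a12, a13, a21, a22, a23, a31, a32, a33,
    nadj_of_side G hs2.symm, nadj_of_side G hs3.symm,
    nadj_of_side G (hs2.trans hs3.symm), nadj_of_side G ht2.symm,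
    nadj_of_side G ht3.symm, nadj_of_side G (ht2.trans ht3.symm), s11, s22, s33⟩

/-- Case I top step: `x'` adjacent to `y` forces `x'` adjacent to `X (k-1)`. -/
lemma topI (G : SignedBigraph V) (hnc : ¬ HasLongInducedCycle G.graph)
    (k : ℕ) (X : ℕ → V)
    (injX : ∀ i, i ≤ k → ∀ j, j ≤ k → X i = X j → i = j)
    (adjX : ∀ i, i ≤ k → ∀ j, j ≤ k → (G.Adj (X i) (X j) ↔ (i + 1 = j ∨ j + 1 = i)))
    (hk : 1 ≤ k) (x' y : V)
    (hx'X : ∀ t, t ≤ k → x' ≠ X t) (hyX : ∀ t, t ≤ k → y ≠ X t) (hyx' : y ≠ x')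
    (hxy : G.Adj x' y)
    (hyadj : ∀ t, t ≤ k → (G.Adj y (X t) ↔ t = k))
    (hoff : ∀ t, t ≤ k → t % 2 ≠ (k - 1) % 2 → ¬ G.Adj x' (X t))
    (hanchor : ((k - 1) % 2 = 0 ∧ G.Adj x' (X 0)) ∨
      ((k - 1) % 2 = 1 ∧ ∃ c : V, G.Adj c (X 0) ∧ G.Adj c x' ∧
        (∀ t, 1 ≤ t → t ≤ k → ¬ G.Adj c (X t)) ∧ ¬ G.Adj c y ∧ c ≠ x' ∧ c ≠ y ∧
        (∀ t, t ≤ k → c ≠ X t))) :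
    G.Adj x' (X (k - 1)) := by
  by_contra hj
  classical
  by_cases hQ : ∃ i, i < k - 1 ∧ G.Adj x' (X i)
  · obtain ⟨i0, hi0j, hi0⟩ := hQ
    set P : ℕ → Prop := fun i => G.Adj x' (X i) with hP
    set m := Nat.findGreatest P (k - 2) with hmdef
    have hm : P m := Nat.findGreatest_spec (m := i0) (by omega) hi0
    have hmax : ∀ t, m < t → t ≤ k - 2 → ¬ P t := fun t h1 h2 =>
      Nat.findGreatest_is_greatest h1 h2
    have hmle : m ≤ k - 2 := Nat.findGreatest_le _
    have hmp : m % 2 = (k - 1) % 2 := by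
      by_contra hc
      exact hoff m (by omega) hc hm
    have hmj : m + 3 ≤ k := by omega
    refine cycleFalse G.graph hnc k X injX adjX m k (by omega) (by omega)
      2 (by omega) (fun s => if s = 0 then x' else y) (by omega) ?_ ?_ ?_ ?_ ?_ ?_
    · intro s hs t ht h
      rcases Nat.eq_zero_or_pos s with rfl | hs1 <;> rcases Nat.eq_zero_or_pos t with rfl | ht1
      · rfl
      · rw [if_pos rfl, if_neg (by omega)] at h; exact absurd h.symm hyx'
      · rw [if_neg (by omega), if_pos rfl] at h; exact absurd h hyx'
      · omega
    · intro s hs t h1 h2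
      rcases Nat.eq_zero_or_pos s with rfl | hs1
      · rw [if_pos rfl]; exact hx'X t (by omega)
      · rw [if_neg (by omega)]; exact hyX t (by omega)
    · intro s hs t ht
      rcases Nat.eq_zero_or_pos s with rfl | hs1 <;> rcases Nat.eq_zero_or_pos t with rfl | ht1
      · rw [if_pos rfl]
        exact ⟨fun h => absurd h (G.graph.loopless.irrefl x'), fun h => absurd h (by omega)⟩
      · rw [if_pos rfl, if_neg (by omega)]
        exact ⟨fun _ => by omega, fun _ => hxy⟩
      · rw [if_neg (by omega), if_pos rfl]
        exact ⟨fun _ => by omega, fun _ => (G.graph.adj_comm _ _).mp hxy⟩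
      · rw [if_neg (by omega), if_neg (by omega)]
        exact ⟨fun h => absurd h (G.graph.loopless.irrefl y), fun h => absurd h (by omega)⟩
    · exact hm
    · exact (hyadj k le_rfl).2 rfl
    · intro s hs t h1 h2 h3 h4
      rcases Nat.eq_zero_or_pos s with rfl | hs1
      · rw [if_pos rfl]
        rcases Nat.lt_or_ge t (k - 1) with hlt | hge
        · by_cases hpar' : t % 2 = (k - 1) % 2
          · have ht0 : m < t := by omega
            exact hmax t ht0 (by omega)
          · exact hoff t (by omega) hpar'
        · rcases Nat.lt_or_ge t k with h5 | h5
          · have : t = k - 1 := by omega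
            exact this ▸ hj
          · have h7 : t = k := by omega
            have h8 := hoff k (by omega) (by omega)
            rw [h7]; exact h8
      · rw [if_neg (by omega)]
        intro hadj
        have := (hyadj t (by omega)).1 hadj
        omega
  · push_neg at hQ
    rcases hanchor with ⟨hpar, h0⟩ | ⟨hpar, c, hc0, hcx, hct, hcy, hcnex, hcney, hcneX⟩
    · rcases Nat.eq_zero_or_pos (k - 1) with hk0 | hjpos
      · rw [hk0] at hj; exact hj h0
      · exact hQ 0 hjpos h0
    · have hk2 : 2 ≤ k := by omega
      refine cycleFalse G.graph hnc k X injX adjX 0 k (by omega) (by omega)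
        3 (by omega) (fun s => if s = 0 then c else if s = 1 then x' else y)
        (by omega) ?_ ?_ ?_ ?_ ?_ ?_
      · intro s hs t ht h
        interval_cases s <;> interval_cases t
        · rfl
        · exact absurd h hcnex
        · exact absurd h hcney
        · exact absurd h.symm hcnex
        · rfl
        · exact absurd h.symm hyx'
        · exact absurd h.symm hcney
        · exact absurd h hyx'
        · rfl
      · intro s hs t h1 h2
        interval_cases s
        · exact hcneX t (by omega)
        · exact hx'X t (by omega)
        · exact hyX t (by omega)
      · intro s hs t ht
        interval_cases s <;> interval_cases t
        · exact ⟨fun h => absurd h (G.graph.loopless.irrefl c), fun h => absurd h (by omega)⟩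
        · exact ⟨fun _ => by omega, fun _ => hcx⟩
        · exact ⟨fun h => absurd h hcy, fun h => absurd h (by omega)⟩
        · exact ⟨fun _ => by omega, fun _ => (G.graph.adj_comm _ _).mp hcx⟩
        · exact ⟨fun h => absurd h (G.graph.loopless.irrefl x'), fun h => absurd h (by omega)⟩
        · exact ⟨fun _ => by omega, fun _ => hxy⟩
        · exact ⟨fun h => absurd ((G.graph.adj_comm _ _).mp h) hcy, fun h => absurd h (by omega)⟩
        · exact ⟨fun _ => by omega, fun _ => (G.graph.adj_comm _ _).mp hxy⟩
        · exact ⟨fun h => absurd h (G.graph.loopless.irrefl y), fun h => absurd h (by omega)⟩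
      · exact hc0
      · exact (hyadj k le_rfl).2 rfl
      · intro s hs t h1 h2 h3 h4
        interval_cases s
        · have ht1 : 1 ≤ t := by
            rcases Nat.eq_zero_or_pos t with rfl | h
            · exact absurd ⟨rfl, rfl⟩ h3
            · omega
          exact hct t ht1 (by omega)
        · rcases Nat.lt_or_ge t (k - 1) with hlt | hge
          · rcases Nat.eq_zero_or_pos t with rfl | htpos
            · exact hoff 0 (by omega) (by omega)
            · by_cases hpar' : t % 2 = (k - 1) % 2
              · exact hQ t hlt
              · exact hoff t (by omega) hpar'
          · rcases Nat.lt_or_ge t k with h5 | h5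
            · have h7 : t = k - 1 := by omega
              rw [h7]; exact hj
            · have h7 : t = k := by omega
              have h8 := hoff k (by omega) (by omega)
              rw [h7]; exact h8
        · intro hadj
          have := (hyadj t (by omega)).1 hadj
          omega


/-- Case II (type 1) top step: `x'` adjacent to `w` forces `x'` adjacent to `X k`. -/
lemma topII1 (G : SignedBigraph V) (hnc : ¬ HasLongInducedCycle G.graph)
    (k : ℕ) (X : ℕ → V)
    (injX : ∀ i, i ≤ k → ∀ j, j ≤ k → X i = X j → i = j)
    (adjX : ∀ i, i ≤ k → ∀ j, j ≤ k → (G.Adj (X i) (X j) ↔ (i + 1 = j ∨ j + 1 = i)))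
    (x' w y : V)
    (hx'X : ∀ t, t ≤ k → x' ≠ X t) (hwX : ∀ t, t ≤ k → w ≠ X t)
    (hyX : ∀ t, t ≤ k → y ≠ X t)
    (hwx' : w ≠ x') (hyx' : y ≠ x') (hwy : w ≠ y)
    (hxw : G.Adj x' w) (hwyA : G.Adj w y) (hxy : ¬ G.Adj x' y)
    (hyadj : ∀ t, t ≤ k → (G.Adj y (X t) ↔ t = k))
    (hwadj : ∀ t, t ≤ k → ¬ G.Adj w (X t))
    (hoff : ∀ t, t ≤ k → t % 2 ≠ k % 2 → ¬ G.Adj x' (X t))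
    (hanchor : (k % 2 = 0 ∧ G.Adj x' (X 0)) ∨
      (k % 2 = 1 ∧ ∃ c : V, G.Adj c (X 0) ∧ G.Adj c x' ∧
        (∀ t, 1 ≤ t → t ≤ k → ¬ G.Adj c (X t)) ∧ ¬ G.Adj c y ∧ ¬ G.Adj c w ∧
        c ≠ x' ∧ c ≠ y ∧ c ≠ w ∧ (∀ t, t ≤ k → c ≠ X t))) :
    G.Adj x' (X k) := by
  by_contra hj
  classical
  by_cases hQ : ∃ i, i < k ∧ G.Adj x' (X i)
  · obtain ⟨i0, hi0j, hi0⟩ := hQ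
    set P : ℕ → Prop := fun i => G.Adj x' (X i) with hP
    set m := Nat.findGreatest P (k - 1) with hmdef
    have hm : P m := Nat.findGreatest_spec (m := i0) (by omega) hi0
    have hmax : ∀ t, m < t → t ≤ k - 1 → ¬ P t := fun t h1 h2 =>
      Nat.findGreatest_is_greatest h1 h2
    have hmle : m ≤ k - 1 := Nat.findGreatest_le _
    have hmp : m % 2 = k % 2 := by
      by_contra hc
      exact hoff m (by omega) hc hm
    have hmj : m + 2 ≤ k := by omega
    refine cycleFalse G.graph hnc k X injX adjX m k (by omega) (by omega)
      3 (by omega) (fun s => if s = 0 then x' else if s = 1 then w else y)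
      (by omega) ?_ ?_ ?_ ?_ ?_ ?_
    · intro s hs t ht h
      interval_cases s <;> interval_cases t
      · rfl
      · exact absurd h.symm hwx'
      · exact absurd h.symm hyx'
      · exact absurd h hwx'
      · rfl
      · exact absurd h hwy
      · exact absurd h hyx'
      · exact absurd h.symm hwy
      · rfl
    · intro s hs t h1 h2
      interval_cases s
      · exact hx'X t (by omega)
      · exact hwX t (by omega)
      · exact hyX t (by omega)
    · intro s hs t ht
      interval_cases s <;> interval_cases t
      · exact ⟨fun h => absurd h (G.graph.loopless.irrefl x'), fun h => absurd h (by omega)⟩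
      · exact ⟨fun _ => by omega, fun _ => hxw⟩
      · exact ⟨fun h => absurd h hxy, fun h => absurd h (by omega)⟩
      · exact ⟨fun _ => by omega, fun _ => (G.graph.adj_comm _ _).mp hxw⟩
      · exact ⟨fun h => absurd h (G.graph.loopless.irrefl w), fun h => absurd h (by omega)⟩
      · exact ⟨fun _ => by omega, fun _ => hwyA⟩
      · exact ⟨fun h => absurd ((G.graph.adj_comm _ _).mp h) hxy, fun h => absurd h (by omega)⟩
      · exact ⟨fun _ => by omega, fun _ => (G.graph.adj_comm _ _).mp hwyA⟩
      · exact ⟨fun h => absurd h (G.graph.loopless.irrefl y), fun h => absurd h (by omega)⟩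
    · exact hm
    · exact (hyadj k le_rfl).2 rfl
    · intro s hs t h1 h2 h3 h4
      interval_cases s
      · rcases Nat.lt_or_ge t k with hlt | hge
        · by_cases hpar' : t % 2 = k % 2
          · exact hmax t (by omega) (by omega)
          · exact hoff t (by omega) hpar'
        · have h7 : t = k := by omega
          rw [h7]; exact hj
      · exact hwadj t (by omega)
      · intro hadj
        have := (hyadj t (by omega)).1 hadj
        omega
  · push_neg at hQ
    rcases hanchor with ⟨hpar, h0⟩ | ⟨hpar, c, hc0, hcx, hct, hcy, hcw, hcnex, hcney, hcnew, hcneX⟩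
    · rcases Nat.eq_zero_or_pos k with rfl | hjpos
      · exact hj h0
      · exact hQ 0 hjpos h0
    · have hk1 : 1 ≤ k := by omega
      refine cycleFalse G.graph hnc k X injX adjX 0 k (by omega) (by omega)
        4 (by omega)
        (fun s => if s = 0 then c else if s = 1 then x' else if s = 2 then w else y)
        (by omega) ?_ ?_ ?_ ?_ ?_ ?_
      · intro s hs t ht h
        interval_cases s <;> interval_cases t
        · rfl
        · exact absurd h hcnex
        · exact absurd h hcnew
        · exact absurd h hcney
        · exact absurd h.symm hcnex
        · rfl
        · exact absurd h.symm hwx'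
        · exact absurd h.symm hyx'
        · exact absurd h.symm hcnew
        · exact absurd h hwx'
        · rfl
        · exact absurd h hwy
        · exact absurd h.symm hcney
        · exact absurd h hyx'
        · exact absurd h.symm hwy
        · rfl
      · intro s hs t h1 h2
        interval_cases s
        · exact hcneX t (by omega)
        · exact hx'X t (by omega)
        · exact hwX t (by omega)
        · exact hyX t (by omega)
      · intro s hs t ht
        interval_cases s <;> interval_cases t
        · exact ⟨fun h => absurd h (G.graph.loopless.irrefl c), fun h => absurd h (by omega)⟩
        · exact ⟨fun _ => by omega, fun _ => hcx⟩
        · exact ⟨fun h => absurd h hcw, fun h => absurd h (by omega)⟩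
        · exact ⟨fun h => absurd h hcy, fun h => absurd h (by omega)⟩
        · exact ⟨fun _ => by omega, fun _ => (G.graph.adj_comm _ _).mp hcx⟩
        · exact ⟨fun h => absurd h (G.graph.loopless.irrefl x'), fun h => absurd h (by omega)⟩
        · exact ⟨fun _ => by omega, fun _ => hxw⟩
        · exact ⟨fun h => absurd h hxy, fun h => absurd h (by omega)⟩
        · exact ⟨fun h => absurd ((G.graph.adj_comm _ _).mp h) hcw, fun h => absurd h (by omega)⟩
        · exact ⟨fun _ => by omega, fun _ => (G.graph.adj_comm _ _).mp hxw⟩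
        · exact ⟨fun h => absurd h (G.graph.loopless.irrefl w), fun h => absurd h (by omega)⟩
        · exact ⟨fun _ => by omega, fun _ => hwyA⟩
        · exact ⟨fun h => absurd ((G.graph.adj_comm _ _).mp h) hcy, fun h => absurd h (by omega)⟩
        · exact ⟨fun h => absurd ((G.graph.adj_comm _ _).mp h) hxy, fun h => absurd h (by omega)⟩
        · exact ⟨fun _ => by omega, fun _ => (G.graph.adj_comm _ _).mp hwyA⟩
        · exact ⟨fun h => absurd h (G.graph.loopless.irrefl y), fun h => absurd h (by omega)⟩
      · exact hc0
      · exact (hyadj k le_rfl).2 rfl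
      · intro s hs t h1 h2 h3 h4
        interval_cases s
        · have ht1 : 1 ≤ t := by
            rcases Nat.eq_zero_or_pos t with rfl | h
            · exact absurd ⟨rfl, rfl⟩ h3
            · omega
          exact hct t ht1 (by omega)
        · rcases Nat.lt_or_ge t k with hlt | hge
          · rcases Nat.eq_zero_or_pos t with rfl | htpos
            · exact hoff 0 (by omega) (by omega)
            · by_cases hpar' : t % 2 = k % 2
              · exact hQ t hlt
              · exact hoff t (by omega) hpar'
          · have h7 : t = k := by omega
            rw [h7]; exact hj
        · exact hwadj t (by omega)
        · intro hadj
          have := (hyadj t (by omega)).1 hadj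
          omega



/-- Case II (type 2) top step. -/
lemma topII2 (G : SignedBigraph V) (hnc : ¬ HasLongInducedCycle G.graph)
    (hnd : ¬ G.HasD)
    (k : ℕ) (X : ℕ → V)
    (injX : ∀ i, i ≤ k → ∀ j, j ≤ k → X i = X j → i = j)
    (adjX : ∀ i, i ≤ k → ∀ j, j ≤ k → (G.Adj (X i) (X j) ↔ (i + 1 = j ∨ j + 1 = i)))
    (hk : 1 ≤ k) (x' w y : V)
    (hx'X : ∀ t, t ≤ k → x' ≠ X t) (hwX : ∀ t, t ≤ k → w ≠ X t)
    (hyX : ∀ t, t ≤ k → y ≠ X t)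
    (hwx' : w ≠ x') (hyx' : y ≠ x') (hwy : w ≠ y)
    (hxw : G.Adj x' w) (hwyA : G.Adj w y) (hxy : ¬ G.Adj x' y)
    (hyadj : ∀ t, t ≤ k → (G.Adj y (X t) ↔ t = k))
    (hwk1 : G.Adj w (X (k - 1))) (hswk1 : G.sign w (X (k - 1)) = false)
    (hwadj2 : ∀ t, t ≤ k → t ≠ k - 1 → ¬ G.Adj w (X t))
    (hoff : ∀ t, t ≤ k → t % 2 ≠ k % 2 → ¬ G.Adj x' (X t))
    (hanchor : (k % 2 = 0 ∧ G.Adj x' (X 0)) ∨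
      (k % 2 = 1 ∧ ∃ c : V, G.Adj c (X 0) ∧ G.Adj c x' ∧
        (∀ t, 1 ≤ t → t ≤ k → ¬ G.Adj c (X t)) ∧ ¬ G.Adj c y ∧ ¬ G.Adj c w ∧
        c ≠ x' ∧ c ≠ y ∧ c ≠ w ∧ (∀ t, t ≤ k → c ≠ X t))) :
    G.Adj x' (X k) := by
  by_contra hj
  classical
  by_cases hQ : ∃ i, i < k ∧ G.Adj x' (X i)
  · obtain ⟨i0, hi0j, hi0⟩ := hQ
    set P : ℕ → Prop := fun i => G.Adj x' (X i) with hP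
    set m := Nat.findGreatest P (k - 1) with hmdef
    have hm : P m := Nat.findGreatest_spec (m := i0) (by omega) hi0
    have hmax : ∀ t, m < t → t ≤ k - 1 → ¬ P t := fun t h1 h2 =>
      Nat.findGreatest_is_greatest h1 h2
    have hmle : m ≤ k - 1 := Nat.findGreatest_le _
    have hmp : m % 2 = k % 2 := by
      by_contra hc
      exact hoff m (by omega) hc hm
    have hmj : m + 2 ≤ k := by omega
    by_cases hm2 : m = k - 2
    · -- D₈
      rcases Nat.lt_or_ge k 2 with hk2 | hk2
      · omega
      have hxk2 : G.Adj x' (X (k - 2)) := hm2 ▸ hm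
      have aXk : G.Adj (X k) (X (k - 1)) := (adjX k le_rfl (k-1) (by omega)).2 (by omega)
      have aX21 : G.Adj (X (k - 1)) (X (k - 2)) := (adjX (k-1) (by omega) (k-2) (by omega)).2 (by omega)
      have hyXk : G.Adj y (X k) := (hyadj k le_rfl).2 rfl
      apply hnd
      refine mkD G (X (k - 2)) w (X k) x' (X (k - 1)) y
        (fun h => hwX (k-2) (by omega) h.symm) (fun h => by exact absurd (injX _ (by omega) _ (by omega) h) (by omega))
        (fun h => hwX k le_rfl h)
        (fun h => hx'X (k-1) (by omega) h) hyx'.symm (fun h => hyX (k-1) (by omega) h.symm)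
        ?_ ?_ ?_ ?_
        ((G.graph.adj_comm _ _).mp hxk2) hxw hwyA hyXk aXk
        aX21 hwk1 hswk1
        (fun h => by have := (hyadj (k-2) (by omega)).1 ((G.graph.adj_comm _ _).mp h); omega)
        (fun h => hj ((G.graph.adj_comm _ _).mp h))
      · exact bool3 _ _ _ (G.bipartite hwk1) (Ne.symm (G.bipartite aX21))
      · exact bool3 _ _ _ (G.bipartite aXk) (Ne.symm (G.bipartite aX21))
      · exact bool3 _ _ _ (Ne.symm (G.bipartite hwk1)) (G.bipartite hxw)
      · exact bool3 _ _ _ (Ne.symm (G.bipartite hwyA)) (G.bipartite hxw)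
    · have hm4 : m + 4 ≤ k := by omega
      refine cycleFalse G.graph hnc k X injX adjX m (k - 1) (by omega) (by omega)
        2 (by omega) (fun s => if s = 0 then x' else w) (by omega) ?_ ?_ ?_ ?_ ?_ ?_
      · intro s hs t ht h
        interval_cases s <;> interval_cases t
        · rfl
        · exact absurd h.symm hwx'
        · exact absurd h hwx'
        · rfl
      · intro s hs t h1 h2
        interval_cases s
        · exact hx'X t (by omega)
        · exact hwX t (by omega)
      · intro s hs t ht
        interval_cases s <;> interval_cases t
        · exact ⟨fun h => absurd h (G.graph.loopless.irrefl x'), fun h => absurd h (by omega)⟩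
        · exact ⟨fun _ => by omega, fun _ => hxw⟩
        · exact ⟨fun _ => by omega, fun _ => (G.graph.adj_comm _ _).mp hxw⟩
        · exact ⟨fun h => absurd h (G.graph.loopless.irrefl w), fun h => absurd h (by omega)⟩
      · exact hm
      · exact hwk1
      · intro s hs t h1 h2 h3 h4
        interval_cases s
        · exact hmax t (by omega) (by omega)
        · exact hwadj2 t (by omega) (by omega)
  · push_neg at hQ
    rcases hanchor with ⟨hpar, h0⟩ | ⟨hpar, c, hc0, hcx, hct, hcy, hcw, hcnex, hcney, hcnew, hcneX⟩
    · exact hQ 0 (by omega) h0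
    · rcases Nat.lt_or_ge k 2 with hk2 | hk2
      · -- k = 1 : D₇
        have hk1' : k = 1 := by omega
        subst hk1'
        have hyX1 : G.Adj y (X 1) := (hyadj 1 le_rfl).2 rfl
        have aX10 : G.Adj (X 1) (X 0) := (adjX 1 le_rfl 0 (by omega)).2 (by omega)
        apply hnd
        refine mkD G c w (X 1) x' (X 0) y
          hcnew (fun h => hcneX 1 le_rfl h) (fun h => hwX 1 le_rfl h)
          (fun h => hx'X 0 (by omega) h) hyx'.symm (fun h => hyX 0 (by omega) h.symm)
          ?_ ?_ ?_ ?_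
          hcx hxw hwyA hyX1 aX10
          ((G.graph.adj_comm _ _).mp hc0) hwk1 hswk1
          hcy (fun h => hj ((G.graph.adj_comm _ _).mp h))
        · exact bool3 _ _ _ (Ne.symm (G.bipartite hxw)) (G.bipartite hcx)
        · exact bool3 _ _ _ (G.bipartite aX10) (G.bipartite hc0)
        · exact bool3 _ _ _ (Ne.symm (G.bipartite hc0)) (Ne.symm (G.bipartite hcx))
        · exact bool3 _ _ _ (Ne.symm (G.bipartite hwyA)) (G.bipartite hxw)
      · -- k ≥ 3 (k odd)
        have hk3 : 3 ≤ k := by omega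
        refine cycleFalse G.graph hnc k X injX adjX 0 (k - 1) (by omega) (by omega)
          3 (by omega) (fun s => if s = 0 then c else if s = 1 then x' else w)
          (by omega) ?_ ?_ ?_ ?_ ?_ ?_
        · intro s hs t ht h
          interval_cases s <;> interval_cases t
          · rfl
          · exact absurd h hcnex
          · exact absurd h hcnew
          · exact absurd h.symm hcnex
          · rfl
          · exact absurd h.symm hwx'
          · exact absurd h.symm hcnew
          · exact absurd h hwx'
          · rfl
        · intro s hs t h1 h2
          interval_cases s
          · exact hcneX t (by omega)
          · exact hx'X t (by omega)
          · exact hwX t (by omega)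
        · intro s hs t ht
          interval_cases s <;> interval_cases t
          · exact ⟨fun h => absurd h (G.graph.loopless.irrefl c), fun h => absurd h (by omega)⟩
          · exact ⟨fun _ => by omega, fun _ => hcx⟩
          · exact ⟨fun h => absurd h hcw, fun h => absurd h (by omega)⟩
          · exact ⟨fun _ => by omega, fun _ => (G.graph.adj_comm _ _).mp hcx⟩
          · exact ⟨fun h => absurd h (G.graph.loopless.irrefl x'), fun h => absurd h (by omega)⟩
          · exact ⟨fun _ => by omega, fun _ => hxw⟩
          · exact ⟨fun h => absurd ((G.graph.adj_comm _ _).mp h) hcw, fun h => absurd h (by omega)⟩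
          · exact ⟨fun _ => by omega, fun _ => (G.graph.adj_comm _ _).mp hxw⟩
          · exact ⟨fun h => absurd h (G.graph.loopless.irrefl w), fun h => absurd h (by omega)⟩
        · exact hc0
        · exact hwk1
        · intro s hs t h1 h2 h3 h4
          interval_cases s
          · have ht1 : 1 ≤ t := by
              rcases Nat.eq_zero_or_pos t with rfl | h
              · exact absurd ⟨rfl, rfl⟩ h3
              · omega
            exact hct t ht1 (by omega)
          · exact hQ t (by omega)
          · exact hwadj2 t (by omega) (by omega)



/-- Negative sign on a middle path edge `x'xⱼ` (2 ≤ j ≤ k-2) gives a `D`. -/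
lemma signD3 (G : SignedBigraph V) (hnd : ¬ G.HasD)
    (k : ℕ) (X : ℕ → V)
    (injX : ∀ i, i ≤ k → ∀ j, j ≤ k → X i = X j → i = j)
    (adjX : ∀ i, i ≤ k → ∀ j, j ≤ k → (G.Adj (X i) (X j) ↔ (i + 1 = j ∨ j + 1 = i)))
    (x' : V) (hx'X : ∀ t, t ≤ k → x' ≠ X t)
    (j : ℕ) (hj2 : 2 ≤ j) (hjk : j + 2 ≤ k)
    (hdn : G.Adj x' (X (j - 2))) (hup : G.Adj x' (X (j + 2)))
    (hmid : G.Adj x' (X j)) (hneg : G.sign x' (X j) = false) : False := by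
  have pa : ∀ i1, i1 ≤ k → ∀ i2, i2 ≤ k → i1 + 1 = i2 ∨ i2 + 1 = i1 → G.Adj (X i1) (X i2) :=
    fun i1 h1 i2 h2 h => (adjX i1 h1 i2 h2).2 h
  have na : ∀ i1, i1 ≤ k → ∀ i2, i2 ≤ k → ¬(i1 + 1 = i2 ∨ i2 + 1 = i1) → ¬ G.Adj (X i1) (X i2) :=
    fun i1 h1 i2 h2 h ha => h ((adjX i1 h1 i2 h2).1 ha)
  have a1 : G.Adj (X (j-1)) (X (j-2)) := pa _ (by omega) _ (by omega) (by omega)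
  have a2 : G.Adj (X j) (X (j-1)) := pa _ (by omega) _ (by omega) (by omega)
  have a3 : G.Adj (X (j+1)) (X j) := pa _ (by omega) _ (by omega) (by omega)
  have a4 : G.Adj (X (j+2)) (X (j+1)) := pa _ (by omega) _ (by omega) (by omega)
  apply hnd
  refine mkD G (X (j-1)) x' (X (j+1)) (X (j-2)) (X j) (X (j+2))
    (fun h => hx'X (j-1) (by omega) h.symm)
    (fun h => by have := injX _ (by omega) _ (by omega) h; omega)
    (fun h => hx'X (j+1) (by omega) h)
    (fun h => by have := injX _ (by omega) _ (by omega) h; omega)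
    (fun h => by have := injX _ (by omega) _ (by omega) h; omega)
    (fun h => by have := injX _ (by omega) _ (by omega) h; omega)
    ?_ ?_ ?_ ?_
    a1 ((G.graph.adj_comm _ _).mp hdn) hup a4 a3 a2 hmid hneg
    (na _ (by omega) _ (by omega) (by omega))
    (na _ (by omega) _ (by omega) (by omega))
  · exact bool3 _ _ _ (G.bipartite hmid) (Ne.symm (G.bipartite a2))
  · exact bool3 _ _ _ (G.bipartite a3) (Ne.symm (G.bipartite a2))
  · exact bool3 _ _ _ (G.bipartite a2) (Ne.symm (G.bipartite a1))
  · exact (bool3 _ _ _ (G.bipartite a4) (Ne.symm (G.bipartite a3))).trans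
      (bool3 _ _ _ (G.bipartite a2) (Ne.symm (G.bipartite a1)))

/-- Negative sign on `x'x₁` with the common-neighbour connection gives a `D`. -/
lemma signD5 (G : SignedBigraph V) (hnd : ¬ G.HasD)
    (k : ℕ) (X : ℕ → V)
    (injX : ∀ i, i ≤ k → ∀ j, j ≤ k → X i = X j → i = j)
    (adjX : ∀ i, i ≤ k → ∀ j, j ≤ k → (G.Adj (X i) (X j) ↔ (i + 1 = j ∨ j + 1 = i)))
    (x' c : V) (hx'X : ∀ t, t ≤ k → x' ≠ X t)
    (hc0 : G.Adj c (X 0)) (hcx : G.Adj c x')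
    (hct : ∀ t, 1 ≤ t → t ≤ k → ¬ G.Adj c (X t)) (hcneX : ∀ t, t ≤ k → c ≠ X t)
    (h3k : 3 ≤ k)
    (hup : G.Adj x' (X 3)) (hmid : G.Adj x' (X 1)) (hneg : G.sign x' (X 1) = false) :
    False := by
  have pa : ∀ i1, i1 ≤ k → ∀ i2, i2 ≤ k → i1 + 1 = i2 ∨ i2 + 1 = i1 → G.Adj (X i1) (X i2) :=
    fun i1 h1 i2 h2 h => (adjX i1 h1 i2 h2).2 h
  have na : ∀ i1, i1 ≤ k → ∀ i2, i2 ≤ k → ¬(i1 + 1 = i2 ∨ i2 + 1 = i1) → ¬ G.Adj (X i1) (X i2) :=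
    fun i1 h1 i2 h2 h ha => h ((adjX i1 h1 i2 h2).1 ha)
  have a1 : G.Adj (X 1) (X 0) := pa _ (by omega) _ (by omega) (by omega)
  have a2 : G.Adj (X 2) (X 1) := pa _ (by omega) _ (by omega) (by omega)
  have a3 : G.Adj (X 3) (X 2) := pa _ (by omega) _ (by omega) (by omega)
  apply hnd
  refine mkD G (X 0) x' (X 2) c (X 1) (X 3)
    (fun h => hx'X 0 (by omega) h.symm)
    (fun h => by have := injX _ (by omega) _ (by omega) h; omega)
    (fun h => hx'X 2 (by omega) h)
    (fun h => (hcneX 1 (by omega)) h)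
    (fun h => (hcneX 3 (by omega)) h)
    (fun h => by have := injX _ (by omega) _ (by omega) h; omega)
    ?_ ?_ ?_ ?_
    ((G.graph.adj_comm _ _).mp hc0) hcx hup a3 a2 a1 hmid hneg
    (na _ (by omega) _ (by omega) (by omega))
    (fun h => hct 2 (by omega) (by omega) ((G.graph.adj_comm _ _).mp h))
  · exact bool3 _ _ _ (Ne.symm (G.bipartite hcx)) (Ne.symm (G.bipartite hc0))
  · exact bool3 _ _ _ (G.bipartite a2) (Ne.symm (G.bipartite a1))
  · exact bool3 _ _ _ (G.bipartite a1) (G.bipartite hc0)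
  · exact (bool3 _ _ _ (G.bipartite a3) (Ne.symm (G.bipartite a2))).trans
      (bool3 _ _ _ (G.bipartite a1) (G.bipartite hc0))


end Mk



open SignedBigraph in
/-- Core of case I: `x'` adjacent to the head `y`. -/
lemma coreI {V : Type u} (G : SignedBigraph V) (hF : G.FFree)
    (k : ℕ) (t2 : Bool) (w y z : V) (x : Fin (k + 1) → V)
    (hT : G.IsInducedTadpole k t2 w y z x)
    (x' : V) (hx' : x' ∉ tadVerts w y z x)
    (hconn : G.Adj (x 0) x' ∨
      ∃ c : V, G.Adj (x 0) c ∧ G.Adj x' c ∧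
        ∀ t ∈ tadVerts w y z x, t ≠ x 0 → ¬ G.Adj c t)
    (hy : G.Adj x' y) :
    (∀ j, j ≤ k → j % 2 ≠ k % 2 → G.Adj x' (tadX k x j)) ∧ G.Adj x' z ∧
    G.sign x' y = true ∧
    (∀ j, 1 ≤ j → j ≤ k → j % 2 ≠ k % 2 → G.sign x' (tadX k x j) = true) := by
  classical
  set X := tadX k x with hXdef
  have hnc : ¬ HasLongInducedCycle G.graph := fun h =>
    hF (Or.inr (Or.inr (Or.inr (Or.inr (Or.inr (Or.inr (Or.inl h)))))))
  have hnd : ¬ G.HasD := fun h =>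
    hF (Or.inr (Or.inr (Or.inr (Or.inr (Or.inr (Or.inr (Or.inr (Or.inl h))))))))
  have hn4 : ¬ G.HasF4 := fun h => hF (Or.inr (Or.inr (Or.inr (Or.inl h))))
  have hn5 : ¬ G.HasF5 := fun h => hF (Or.inr (Or.inr (Or.inr (Or.inr (Or.inl h)))))
  have injX := hT.injX
  have adjX := hT.adjX
  have adjY := hT.adjYX
  have adjZ := hT.adjZX
  have adjW := hT.adjWX
  have cm : ∀ a b : V, G.Adj a b → G.Adj b a := fun a b h => (G.graph.adj_comm a b).mp h
  have pa : ∀ i1, i1 ≤ k → ∀ i2, i2 ≤ k → i1 + 1 = i2 ∨ i2 + 1 = i1 → G.Adj (X i1) (X i2) :=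
    fun i1 h1 i2 h2 h => (adjX i1 h1 i2 h2).2 h
  have na : ∀ i1, i1 ≤ k → ∀ i2, i2 ≤ k → ¬(i1 + 1 = i2 ∨ i2 + 1 = i1) → ¬ G.Adj (X i1) (X i2) :=
    fun i1 h1 i2 h2 h ha => h ((adjX i1 h1 i2 h2).1 ha)
  have hx'X : ∀ t, x' ≠ X t := fun t h => hx' (by rw [h]; exact hT.memX t)
  have hx'w : x' ≠ w := fun h => hx' (by rw [h]; exact Or.inl (by simp))
  have hx'y : x' ≠ y := fun h => hx' (by rw [h]; exact Or.inl (by simp))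
  have hx'z : x' ≠ z := fun h => hx' (by rw [h]; exact Or.inl (by simp))
  have hAyk : G.Adj y (X k) := (adjY k le_rfl).2 rfl
  have hAzk : G.Adj z (X k) := (adjZ k le_rfl).2 rfl
  have sxk : G.side x' = G.side (X k) :=
    bool3 _ _ _ (G.bipartite hy) (Ne.symm (G.bipartite hAyk))
  have syz : G.side y = G.side z :=
    bool3 _ _ _ (Ne.symm (G.bipartite hT.adj_wy)) (Ne.symm (G.bipartite hT.adj_wz))
  have hsame : ∀ t, t ≤ k → t % 2 = k % 2 → ¬ G.Adj x' (X t) := by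
    intro t ht hp hadj
    have h1 : G.side (X t) = G.side (X k) := (hT.sideX_iff t ht k le_rfl).2 hp
    exact (G.bipartite hadj) (sxk.trans h1.symm)
  have hanchor : (G.Adj x' (X 0) ∧ k % 2 = 1) ∨
      (k % 2 = 0 ∧ ∃ c : V, G.Adj c (X 0) ∧ G.Adj c x' ∧
        (∀ t, 1 ≤ t → t ≤ k → ¬ G.Adj c (X t)) ∧ ¬ G.Adj c y ∧ ¬ G.Adj c z ∧ ¬ G.Adj c w ∧
        c ≠ x' ∧ c ≠ y ∧ c ≠ z ∧ c ≠ w ∧ (∀ t, t ≤ k → c ≠ X t)) := by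
    rcases hconn with hd | ⟨c, hc1, hc2, hc3⟩
    · left
      have h0 : G.Adj x' (X 0) := by
        rw [hXdef, tadX_zero]; exact cm _ _ hd
      refine ⟨h0, ?_⟩
      have h1 : G.side x' ≠ G.side (X 0) := Ne.symm (G.bipartite (cm _ _ h0))
      have h2 : ¬ (0 % 2 = k % 2) := fun hp =>
        h1 (sxk.trans ((hT.sideX_iff 0 (by omega) k le_rfl).2 hp).symm)
      omega
    · right
      have hc0 : G.Adj c (X 0) := by
        rw [hXdef, tadX_zero]; exact cm _ _ hc1
      have hcx : G.Adj c x' := cm _ _ hc2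
      have hs0 : G.side (X 0) = G.side x' :=
        bool3 _ _ _ (Ne.symm (G.bipartite hc0)) (Ne.symm (G.bipartite hcx))
      have hpar : k % 2 = 0 := by
        have := (hT.sideX_iff 0 (by omega) k le_rfl).1 (hs0.trans sxk)
        omega
      have hX0 : X 0 = x 0 := by rw [hXdef, tadX_zero]
      have hct : ∀ t, 1 ≤ t → t ≤ k → ¬ G.Adj c (X t) := by
        intro t h1 h2
        refine hc3 (X t) (hT.memX t) ?_
        rw [← hX0]
        intro h
        have := injX t h2 0 (by omega) h
        omega
      have hcy : ¬ G.Adj c y := hc3 y (Or.inl (by simp)) (hT.y_notmem 0)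
      have hcz : ¬ G.Adj c z := hc3 z (Or.inl (by simp)) (hT.z_notmem 0)
      have hcw : ¬ G.Adj c w := hc3 w (Or.inl (by simp)) (hT.w_notmem 0)
      have hcnex : c ≠ x' := fun h => G.graph.loopless.irrefl x' (h ▸ hcx)
      have hcney : c ≠ y := fun h => hcw (by rw [h]; exact cm _ _ hT.adj_wy)
      have hcnez : c ≠ z := fun h => hcw (by rw [h]; exact cm _ _ hT.adj_wz)
      have hcnew : c ≠ w := fun h => hcy (by rw [h]; exact hT.adj_wy)
      have hcneX : ∀ t, t ≤ k → c ≠ X t := by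
        intro t ht h
        rcases Nat.eq_zero_or_pos t with rfl | ht1
        · exact G.graph.loopless.irrefl (X 0) (h ▸ hc0)
        · rcases Nat.lt_or_ge t k with hlt | hge
          · exact hct (t+1) (by omega) (by omega)
              (by rw [h]; exact pa t (by omega) (t+1) (by omega) (by omega))
          · have htk : t = k := by omega
            exact hcy (by rw [h, htk]; exact cm _ _ hAyk)
      exact ⟨hpar, c, hc0, hcx, hct, hcy, hcz, hcw, hcnex, hcney, hcnez, hcnew, hcneX⟩
  -- adjacency along the path
  have hadj : ∀ j, j ≤ k → j % 2 ≠ k % 2 → G.Adj x' (X j) := by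
    rcases Nat.eq_zero_or_pos k with rfl | hk
    · intro j hj hp; omega
    · have hoff : ∀ t, t ≤ k → t % 2 ≠ (k - 1) % 2 → ¬ G.Adj x' (X t) :=
        fun t ht hp => hsame t ht (by omega)
      have htop : G.Adj x' (X (k - 1)) := by
        refine topI G hnc k X injX adjX hk x' y (fun t _ => hx'X t)
          (fun t _ => hT.yneX t) (Ne.symm hx'y) hy adjY hoff ?_
        rcases hanchor with ⟨h0, hp⟩ | ⟨hp, c, hc0, hcx, hct, hcy, hcz, hcw,
          hcnex, hcney, hcnez, hcnew, hcneX⟩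
        · left; exact ⟨by omega, h0⟩
        · right; exact ⟨by omega, c, hc0, hcx, hct, hcy, hcnex, hcney, hcneX⟩
      have hstep : ∀ j, j + 2 ≤ k - 1 → j % 2 = (k - 1) % 2 →
          G.Adj x' (X (j + 2)) → G.Adj x' (X j) := by
        intro j h1 h2 h3
        refine stepDown G hnc k X injX adjX x' (fun t _ => hx'X t) j (by omega) h3
          (fun t ht hp => hsame t ht (by omega)) ?_
        rcases hanchor with ⟨h0, hp⟩ | ⟨hp, c, hc0, hcx, hct, hcy, hcz, hcw,
          hcnex, hcney, hcnez, hcnew, hcneX⟩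
        · left; exact ⟨by omega, h0⟩
        · right; exact ⟨by omega, c, hc0, hcx, hct, hcnex, fun t ht => hcneX t ht⟩
      have H := descendAux (fun j => G.Adj x' (X j)) (k - 1) htop hstep
      intro j hj hp
      exact H j (by omega) (by omega)
  -- adjacency to z
  have hz : G.Adj x' z := by
    by_contra hnz
    rcases Nat.eq_zero_or_pos k with rfl | hk
    · rcases hanchor with ⟨h0, hp⟩ | ⟨hp, c, hc0, hcx, hct, hcy, hcz, hcw,
        hcnex, hcney, hcnez, hcnew, hcneX⟩
      · omega
      · apply hnd
        have hszx : G.side z ≠ G.side x' := by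
          rw [← syz]; exact Ne.symm (G.bipartite hy)
        refine mkD G w (X 0) x' z y c
          (hT.wneX 0) (Ne.symm hx'w) (Ne.symm (hx'X 0))
          hT.yz.symm (Ne.symm hcnez) (Ne.symm hcney)
          ?_ ?_ ?_ ?_
          hT.adj_wz hAzk (cm _ _ hc0) hcx hy (cm _ _ hT.adj_wy)
          (cm _ _ hAyk) hT.signYX (fun h => hcw (cm _ _ h)) hnz
        · exact bool3 _ _ _ (Ne.symm (G.bipartite hAyk)) (G.bipartite hT.adj_wy)
        · exact bool3 _ _ _ (G.bipartite hy) (G.bipartite hT.adj_wy)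
        · exact bool3 _ _ _ (Ne.symm (G.bipartite hT.adj_wy)) (Ne.symm (G.bipartite hT.adj_wz))
        · exact bool3 _ _ _ (G.bipartite hcx) hszx
    · have hxk1 : G.Adj x' (X (k - 1)) := hadj (k - 1) (by omega) (by omega)
      have hAk1 : G.Adj (X k) (X (k - 1)) := pa _ le_rfl _ (by omega) (by omega)
      by_cases ht2b : t2 = true
      · have hwk1 : G.Adj w (X (k - 1)) := (adjW (k - 1) (by omega)).2 ⟨ht2b, by omega⟩
        apply hn5
        refine mkF5 G x' (X k) w y (X (k - 1)) z
          (hx'X k) hx'w (Ne.symm (hT.wneX k))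
          (hT.yneX (k - 1)) hT.yz (Ne.symm (hT.zneX (k - 1)))
          sxk.symm (bool3 _ _ _ (G.bipartite hT.adj_wy) (G.bipartite hy))
          (bool3 _ _ _ (Ne.symm (G.bipartite hAk1)) (G.bipartite hAyk))
          syz.symm
          hy hxk1 hnz (cm _ _ hAyk) hAk1 (cm _ _ hAzk)
          hT.adj_wy hwk1 hT.adj_wz
          hT.signYX (hT.signWX ht2b (k - 1) (by omega))
      · have hnt2 : t2 = false := by
          cases h : t2
          · rfl
          · exact absurd h ht2b
        apply hnd
        refine mkD G w (X k) x' z y (X (k - 1))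
          (hT.wneX k) (Ne.symm hx'w) (Ne.symm (hx'X k))
          hT.yz.symm (hT.zneX (k - 1)) (hT.yneX (k - 1))
          ?_ ?_ ?_ ?_
          hT.adj_wz hAzk hAk1 (cm _ _ hxk1) hy (cm _ _ hT.adj_wy)
          (cm _ _ hAyk) hT.signYX
          (fun h => by
            have h2 := (adjW (k - 1) (by omega)).1 h
            rw [hnt2] at h2
            exact absurd h2.1 (by simp)) hnz
        · exact bool3 _ _ _ (Ne.symm (G.bipartite hAyk)) (G.bipartite hT.adj_wy)
        · exact bool3 _ _ _ (G.bipartite hy) (G.bipartite hT.adj_wy)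
        · exact bool3 _ _ _ (Ne.symm (G.bipartite hT.adj_wy)) (Ne.symm (G.bipartite hT.adj_wz))
        · exact bool3 _ _ _ (Ne.symm (G.bipartite hAk1)) (G.bipartite hAzk)
  -- sign on x'y
  have hsy : G.sign x' y = true := by
    by_contra hsy'
    have hneg : G.sign x' y = false := by
      cases h : G.sign x' y
      · rfl
      · exact absurd h hsy'
    rcases Nat.eq_zero_or_pos k with rfl | hk
    · rcases hanchor with ⟨h0, hp⟩ | ⟨hp, c, hc0, hcx, hct, hcy, hcz, hcw,
        hcnex, hcney, hcnez, hcnew, hcneX⟩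
      · omega
      · apply hn5
        have hszx : G.side z ≠ G.side x' := by
          rw [← syz]; exact Ne.symm (G.bipartite hy)
        refine mkF5 G w (X 0) x' z y c
          (hT.wneX 0) (Ne.symm hx'w) (Ne.symm (hx'X 0))
          hT.yz.symm (Ne.symm hcnez) (Ne.symm hcney)
          (bool3 _ _ _ (Ne.symm (G.bipartite hAyk)) (G.bipartite hT.adj_wy))
          (bool3 _ _ _ (G.bipartite hy) (G.bipartite hT.adj_wy))
          (bool3 _ _ _ (Ne.symm (G.bipartite hT.adj_wy)) (Ne.symm (G.bipartite hT.adj_wz)))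
          (bool3 _ _ _ (G.bipartite hcx) hszx)
          hT.adj_wz hT.adj_wy (fun h => hcw (cm _ _ h))
          (cm _ _ hAzk) (cm _ _ hAyk) (cm _ _ hc0)
          hz hy (cm _ _ hcx)
          hT.signZX hneg
    · have hxk1 : G.Adj x' (X (k - 1)) := hadj (k - 1) (by omega) (by omega)
      have hAk1 : G.Adj (X k) (X (k - 1)) := pa _ le_rfl _ (by omega) (by omega)
      by_cases ht2b : t2 = true
      · have hwk1 : G.Adj w (X (k - 1)) := (adjW (k - 1) (by omega)).2 ⟨ht2b, by omega⟩
        apply hn4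
        refine mkF4 G (X k) x' w z y (X (k - 1))
          (Ne.symm (hx'X k)) (hT.wneX k).symm hx'w
          hT.yz.symm (hT.zneX (k - 1)) (hT.yneX (k - 1))
          sxk (bool3 _ _ _ (G.bipartite hT.adj_wy) (Ne.symm (G.bipartite hAyk)))
          syz (bool3 _ _ _ (Ne.symm (G.bipartite hAk1)) (G.bipartite hAzk))
          (cm _ _ hAzk) (cm _ _ hAyk) hAk1
          hz hy hxk1
          hT.adj_wz hT.adj_wy hwk1
          hT.signZX hneg (hT.signWX ht2b (k - 1) (by omega))
      · apply hn5
        refine mkF5 G w (X k) x' z y (X (k - 1))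
          (hT.wneX k) (Ne.symm hx'w) (Ne.symm (hx'X k))
          hT.yz.symm (hT.zneX (k - 1)) (hT.yneX (k - 1))
          (bool3 _ _ _ (Ne.symm (G.bipartite hAyk)) (G.bipartite hT.adj_wy))
          (bool3 _ _ _ (G.bipartite hy) (G.bipartite hT.adj_wy))
          (bool3 _ _ _ (Ne.symm (G.bipartite hT.adj_wy)) (Ne.symm (G.bipartite hT.adj_wz)))
          (bool3 _ _ _ (Ne.symm (G.bipartite hAk1)) (G.bipartite hAzk))
          hT.adj_wz hT.adj_wy
          (fun h => by
            have h2 := (adjW (k - 1) (by omega)).1 h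
            revert ht2b
            simp [h2.1])
          (cm _ _ hAzk) (cm _ _ hAyk) hAk1
          hz hy hxk1
          hT.signZX hneg
  -- signs along the path
  have hsx : ∀ j, 1 ≤ j → j ≤ k → j % 2 ≠ k % 2 → G.sign x' (X j) = true := by
    intro j hj1 hjk hp
    by_contra hs'
    have hneg : G.sign x' (X j) = false := by
      cases h : G.sign x' (X j)
      · rfl
      · exact absurd h hs'
    have hmid : G.Adj x' (X j) := hadj j hjk hp
    rcases Nat.lt_or_ge (j + 2) k with hlt | hge
    · rcases Nat.lt_or_ge 1 j with hj2 | hj2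
      · exact signD3 G hnd k X injX adjX x' (fun t _ => hx'X t) j (by omega) (by omega)
          (hadj (j - 2) (by omega) (by omega)) (hadj (j + 2) (by omega) (by omega)) hmid hneg
      · have hj1' : j = 1 := by omega
        subst hj1'
        rcases hanchor with ⟨h0, hpk⟩ | ⟨hpk, c, hc0, hcx, hct, hcy, hcz, hcw,
          hcnex, hcney, hcnez, hcnew, hcneX⟩
        · omega
        · exact signD5 G hnd k X injX adjX x' c (fun t _ => hx'X t) hc0 hcx hct hcneX
            (by omega) (hadj 3 (by omega) (by omega)) hmid hneg
    · have hjk1 : j = k - 1 := by omega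
      rcases Nat.lt_or_ge k 3 with hklt | hk3
      · -- k = 2, j = 1
        have hj1'' : j = 1 := by omega
        have hkk : k = 2 := by omega
        rw [hj1''] at hmid hneg
        rcases hanchor with ⟨h0, hpk⟩ | ⟨hpk, c, hc0, hcx, hct, hcy, hcz, hcw,
          hcnex, hcney, hcnez, hcnew, hcneX⟩
        · omega
        · have a21 : G.Adj (X 1) (X 0) := pa _ (by omega) _ (by omega) (by omega)
          have a32 : G.Adj (X 2) (X 1) := pa _ (by omega) _ (by omega) (by omega)
          have hy2 : G.Adj y (X 2) := (adjY 2 (by omega)).2 (by omega)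
          apply hnd
          refine mkD G (X 0) x' (X 2) c (X 1) y
            (Ne.symm (hx'X 0))
            (fun h => by have := injX 0 (by omega) 2 (by omega) h; omega)
            (hx'X 2)
            (hcneX 1 (by omega)) hcney (Ne.symm (hT.yneX 1))
            ?_ ?_ ?_ ?_
            (cm _ _ hc0) hcx hy hy2 a32 a21 hmid hneg
            (fun h => by have := (adjY 0 (by omega)).1 (cm _ _ h); omega)
            (fun h => hct 2 (by omega) (by omega) (cm _ _ h))
          · exact bool3 _ _ _ (Ne.symm (G.bipartite hcx)) (Ne.symm (G.bipartite hc0))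
          · exact bool3 _ _ _ (G.bipartite a32) (Ne.symm (G.bipartite a21))
          · exact bool3 _ _ _ (G.bipartite a21) (G.bipartite hc0)
          · exact (bool3 _ _ _ (Ne.symm (G.bipartite hy)) (Ne.symm (G.bipartite hmid))).trans
              (bool3 _ _ _ (G.bipartite a21) (G.bipartite hc0))
      · -- k ≥ 3, j = k - 1
        rw [hjk1] at hmid hneg
        have a11 : G.Adj (X (k-2)) (X (k-3)) := pa _ (by omega) _ (by omega) (by omega)
        have a21 : G.Adj (X (k-1)) (X (k-2)) := pa _ (by omega) _ (by omega) (by omega)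
        have a32 : G.Adj (X k) (X (k-1)) := pa _ (by omega) _ (by omega) (by omega)
        have hxk3 : G.Adj x' (X (k - 3)) := hadj (k - 3) (by omega) (by omega)
        apply hnd
        refine mkD G (X (k-2)) x' (X k) (X (k-3)) (X (k-1)) y
          (Ne.symm (hx'X (k-2)))
          (fun h => by have := injX (k-2) (by omega) k (by omega) h; omega)
          (hx'X k)
          (fun h => by have := injX (k-3) (by omega) (k-1) (by omega) h; omega)
          (Ne.symm (hT.yneX (k-3))) (Ne.symm (hT.yneX (k-1)))
          ?_ ?_ ?_ ?_
          a11 (cm _ _ hxk3) hy hAyk a32 a21 hmid hneg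
          (fun h => by have := (adjY (k-2) (by omega)).1 (cm _ _ h); omega)
          (na k (by omega) (k-3) (by omega) (by omega))
        · exact bool3 _ _ _ (G.bipartite hmid) (Ne.symm (G.bipartite a21))
        · exact bool3 _ _ _ (G.bipartite a32) (Ne.symm (G.bipartite a21))
        · exact bool3 _ _ _ (G.bipartite a21) (Ne.symm (G.bipartite a11))
        · exact (bool3 _ _ _ (Ne.symm (G.bipartite hy)) (Ne.symm (G.bipartite hmid))).trans
            (bool3 _ _ _ (G.bipartite a21) (Ne.symm (G.bipartite a11)))
  exact ⟨hadj, hz, hsy, hsx⟩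



open SignedBigraph in
/-- Core of case II: `x'` adjacent to the head `w`. -/
lemma coreII {V : Type u} (G : SignedBigraph V) (hF : G.FFree)
    (k : ℕ) (t2 : Bool) (w y z : V) (x : Fin (k + 1) → V)
    (hT : G.IsInducedTadpole k t2 w y z x)
    (x' : V) (hx' : x' ∉ tadVerts w y z x)
    (hconn : G.Adj (x 0) x' ∨
      ∃ c : V, G.Adj (x 0) c ∧ G.Adj x' c ∧
        ∀ t ∈ tadVerts w y z x, t ≠ x 0 → ¬ G.Adj c t)
    (hw : G.Adj x' w) :
    (∀ j, j ≤ k → j % 2 = k % 2 → G.Adj x' (tadX k x j)) ∧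
    (∀ j, 1 ≤ j → j ≤ k → j % 2 = k % 2 → G.sign x' (tadX k x j) = true) := by
  classical
  set X := tadX k x with hXdef
  have hnc : ¬ HasLongInducedCycle G.graph := fun h =>
    hF (Or.inr (Or.inr (Or.inr (Or.inr (Or.inr (Or.inr (Or.inl h)))))))
  have hnd : ¬ G.HasD := fun h =>
    hF (Or.inr (Or.inr (Or.inr (Or.inr (Or.inr (Or.inr (Or.inr (Or.inl h))))))))
  have hn5 : ¬ G.HasF5 := fun h => hF (Or.inr (Or.inr (Or.inr (Or.inr (Or.inl h)))))
  have injX := hT.injX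
  have adjX := hT.adjX
  have adjY := hT.adjYX
  have adjW := hT.adjWX
  have cm : ∀ a b : V, G.Adj a b → G.Adj b a := fun a b h => (G.graph.adj_comm a b).mp h
  have pa : ∀ i1, i1 ≤ k → ∀ i2, i2 ≤ k → i1 + 1 = i2 ∨ i2 + 1 = i1 → G.Adj (X i1) (X i2) :=
    fun i1 h1 i2 h2 h => (adjX i1 h1 i2 h2).2 h
  have hx'X : ∀ t, x' ≠ X t := fun t h => hx' (by rw [h]; exact hT.memX t)
  have hx'w : x' ≠ w := fun h => hx' (by rw [h]; exact Or.inl (by simp))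
  have hx'y : x' ≠ y := fun h => hx' (by rw [h]; exact Or.inl (by simp))
  have hAyk : G.Adj y (X k) := (adjY k le_rfl).2 rfl
  have sxy : G.side x' = G.side y :=
    bool3 _ _ _ (G.bipartite hw) (Ne.symm (G.bipartite hT.adj_wy))
  have hxy : ¬ G.Adj x' y := nadj_of_side G sxy
  have sxk' : G.side x' ≠ G.side (X k) := by
    rw [sxy]; exact G.bipartite hAyk
  have hsame : ∀ t, t ≤ k → t % 2 ≠ k % 2 → ¬ G.Adj x' (X t) := by
    intro t ht hp hadj
    have h1 : G.side (X t) ≠ G.side (X k) := fun h2 =>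
      hp ((hT.sideX_iff t ht k le_rfl).1 h2)
    exact (G.bipartite hadj) (bool3 _ _ _ sxk' h1)
  have hanchor : (G.Adj x' (X 0) ∧ k % 2 = 0) ∨
      (k % 2 = 1 ∧ ∃ c : V, G.Adj c (X 0) ∧ G.Adj c x' ∧
        (∀ t, 1 ≤ t → t ≤ k → ¬ G.Adj c (X t)) ∧ ¬ G.Adj c y ∧ ¬ G.Adj c z ∧ ¬ G.Adj c w ∧
        c ≠ x' ∧ c ≠ y ∧ c ≠ z ∧ c ≠ w ∧ (∀ t, t ≤ k → c ≠ X t)) := by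
    rcases hconn with hd | ⟨c, hc1, hc2, hc3⟩
    · left
      have h0 : G.Adj x' (X 0) := by
        rw [hXdef, tadX_zero]; exact cm _ _ hd
      refine ⟨h0, ?_⟩
      have h1 : G.side (X 0) = G.side (X k) :=
        bool3 _ _ _ (Ne.symm (G.bipartite h0)) (Ne.symm sxk')
      have := (hT.sideX_iff 0 (by omega) k le_rfl).1 h1
      omega
    · right
      have hc0 : G.Adj c (X 0) := by
        rw [hXdef, tadX_zero]; exact cm _ _ hc1
      have hcx : G.Adj c x' := cm _ _ hc2
      have hs0 : G.side (X 0) = G.side x' :=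
        bool3 _ _ _ (Ne.symm (G.bipartite hc0)) (Ne.symm (G.bipartite hcx))
      have hpar : k % 2 = 1 := by
        have h2 : ¬ (0 % 2 = k % 2) := fun hp =>
          sxk' (hs0.symm.trans ((hT.sideX_iff 0 (by omega) k le_rfl).2 hp))
        omega
      have hX0 : X 0 = x 0 := by rw [hXdef, tadX_zero]
      have hct : ∀ t, 1 ≤ t → t ≤ k → ¬ G.Adj c (X t) := by
        intro t h1 h2
        refine hc3 (X t) (hT.memX t) ?_
        rw [← hX0]
        intro h
        have := injX t h2 0 (by omega) h
        omega
      have hcy : ¬ G.Adj c y := hc3 y (Or.inl (by simp)) (hT.y_notmem 0)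
      have hcz : ¬ G.Adj c z := hc3 z (Or.inl (by simp)) (hT.z_notmem 0)
      have hcw : ¬ G.Adj c w := hc3 w (Or.inl (by simp)) (hT.w_notmem 0)
      have hcnex : c ≠ x' := fun h => G.graph.loopless.irrefl x' (h ▸ hcx)
      have hcney : c ≠ y := fun h => hcw (by rw [h]; exact cm _ _ hT.adj_wy)
      have hcnez : c ≠ z := fun h => hcw (by rw [h]; exact cm _ _ hT.adj_wz)
      have hcnew : c ≠ w := fun h => hcy (by rw [h]; exact hT.adj_wy)
      have hcneX : ∀ t, t ≤ k → c ≠ X t := by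
        intro t ht h
        rcases Nat.eq_zero_or_pos t with rfl | ht1
        · exact G.graph.loopless.irrefl (X 0) (h ▸ hc0)
        · rcases Nat.lt_or_ge t k with hlt | hge
          · exact hct (t+1) (by omega) (by omega)
              (by rw [h]; exact pa t (by omega) (t+1) (by omega) (by omega))
          · have htk : t = k := by omega
            exact hcy (by rw [h, htk]; exact cm _ _ hAyk)
      exact ⟨hpar, c, hc0, hcx, hct, hcy, hcz, hcw, hcnex, hcney, hcnez, hcnew, hcneX⟩
  have hadj : ∀ j, j ≤ k → j % 2 = k % 2 → G.Adj x' (X j) := by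
    have htop : G.Adj x' (X k) := by
      by_cases ht2b : t2 = true
      · have hk1 : 1 ≤ k := hT.t2_len ht2b
        refine topII2 G hnc hnd k X injX adjX hk1 x' w y
          (fun t _ => hx'X t) (fun t _ => hT.wneX t) (fun t _ => hT.yneX t)
          (Ne.symm hx'w) (Ne.symm hx'y) hT.wy
          hw hT.adj_wy hxy adjY
          ((adjW (k - 1) (by omega)).2 ⟨ht2b, by omega⟩)
          (hT.signWX ht2b (k - 1) (by omega))
          (fun t ht htne h => by have := (adjW t ht).1 h; omega)
          (fun t ht hp => hsame t ht hp) ?_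
        rcases hanchor with ⟨h0, hp⟩ | ⟨hp, c, hc0, hcx, hct, hcy, hcz, hcw,
          hcnex, hcney, hcnez, hcnew, hcneX⟩
        · left; exact ⟨hp, h0⟩
        · right; exact ⟨hp, c, hc0, hcx, hct, hcy, hcw, hcnex, hcney, hcnew, hcneX⟩
      · have hnt2 : t2 = false := by
          cases h : t2
          · rfl
          · exact absurd h ht2b
        refine topII1 G hnc k X injX adjX x' w y
          (fun t _ => hx'X t) (fun t _ => hT.wneX t) (fun t _ => hT.yneX t)
          (Ne.symm hx'w) (Ne.symm hx'y) hT.wy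
          hw hT.adj_wy hxy adjY
          (fun t ht h => by
            have h2 := (adjW t ht).1 h
            rw [hnt2] at h2
            exact absurd h2.1 (by simp))
          (fun t ht hp => hsame t ht hp) ?_
        rcases hanchor with ⟨h0, hp⟩ | ⟨hp, c, hc0, hcx, hct, hcy, hcz, hcw,
          hcnex, hcney, hcnez, hcnew, hcneX⟩
        · left; exact ⟨hp, h0⟩
        · right; exact ⟨hp, c, hc0, hcx, hct, hcy, hcw, hcnex, hcney, hcnew, hcneX⟩
    have hstep : ∀ j, j + 2 ≤ k → j % 2 = k % 2 →
        G.Adj x' (X (j + 2)) → G.Adj x' (X j) := by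
      intro j h1 h2 h3
      refine stepDown G hnc k X injX adjX x' (fun t _ => hx'X t) j (by omega) h3
        (fun t ht hp => hsame t ht (by omega)) ?_
      rcases hanchor with ⟨h0, hp⟩ | ⟨hp, c, hc0, hcx, hct, hcy, hcz, hcw,
        hcnex, hcney, hcnez, hcnew, hcneX⟩
      · left; exact ⟨by omega, h0⟩
      · right; exact ⟨by omega, c, hc0, hcx, hct, hcnex, fun t ht => hcneX t ht⟩
    exact descendAux (fun j => G.Adj x' (X j)) k htop hstep
  refine ⟨hadj, ?_⟩
  intro j hj1 hjk hp
  by_contra hs'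
  have hneg : G.sign x' (X j) = false := by
    cases h : G.sign x' (X j)
    · rfl
    · exact absurd h hs'
  have hmid : G.Adj x' (X j) := hadj j hjk hp
  rcases Nat.lt_or_ge j k with hjlt | hjge
  · -- j ≤ k - 2 by parity
    have hjk2 : j + 2 ≤ k := by omega
    rcases Nat.lt_or_ge 1 j with hj2 | hj2
    · exact signD3 G hnd k X injX adjX x' (fun t _ => hx'X t) j (by omega) (by omega)
        (hadj (j - 2) (by omega) (by omega)) (hadj (j + 2) (by omega) (by omega)) hmid hneg
    · have hj1' : j = 1 := by omega
      subst hj1'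
      rcases hanchor with ⟨h0, hpk⟩ | ⟨hpk, c, hc0, hcx, hct, hcy, hcz, hcw,
        hcnex, hcney, hcnez, hcnew, hcneX⟩
      · omega
      · exact signD5 G hnd k X injX adjX x' c (fun t _ => hx'X t) hc0 hcx hct hcneX
          (by omega) (hadj 3 (by omega) (by omega)) hmid hneg
  · -- j = k
    have hjk' : j = k := by omega
    rw [hjk'] at hmid hneg
    by_cases ht2b : t2 = true
    · -- type 2 : F5
      have hk1 : 1 ≤ k := hT.t2_len ht2b
      rcases Nat.lt_or_ge k 2 with hklt | hk2
      · -- k = 1, c-case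
        have hkk : k = 1 := by omega
        rcases hanchor with ⟨h0, hpk⟩ | ⟨hpk, c, hc0, hcx, hct, hcy, hcz, hcw,
          hcnex, hcney, hcnez, hcnew, hcneX⟩
        · omega
        · have hwk1 : G.Adj w (X (k-1)) := (adjW (k-1) (by omega)).2 ⟨ht2b, by omega⟩
          have hswk1 := hT.signWX ht2b (k-1) (by omega)
          have aKK1 : G.Adj (X k) (X (k-1)) := pa _ le_rfl _ (by omega) (by omega)
          have hc0' : G.Adj c (X (k-1)) := by
            have h : k - 1 = 0 := by omega
            rw [h]; exact hc0
          apply hn5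
          refine mkF5 G c w (X k) (X (k-1)) x' y
            hcnew (hcneX k le_rfl) (hT.wneX k)
            (Ne.symm (hx'X (k-1))) (Ne.symm (hT.yneX (k-1))).symm.symm hx'y
            ?_ ?_ ?_ ?_
            hc0' hcx hcy
            hwk1 (cm _ _ hw) hT.adj_wy
            aKK1 (cm _ _ hmid) (cm _ _ hAyk)
            hswk1 ((G.sign_symm (X k) x').trans hneg)
          · exact bool3 _ _ _ (Ne.symm (G.bipartite hw)) (G.bipartite hcx)
          · exact bool3 _ _ _ (G.bipartite aKK1) (G.bipartite hc0')
          · exact bool3 _ _ _ (Ne.symm (G.bipartite hcx)) (Ne.symm (G.bipartite hc0'))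
          · exact sxy.symm.trans
              (bool3 _ _ _ (Ne.symm (G.bipartite hcx)) (Ne.symm (G.bipartite hc0')))
      · -- k ≥ 2
        have hwk1 : G.Adj w (X (k-1)) := (adjW (k - 1) (by omega)).2 ⟨ht2b, by omega⟩
        have aKK1 : G.Adj (X k) (X (k-1)) := pa _ le_rfl _ (by omega) (by omega)
        have aK1K2 : G.Adj (X (k-1)) (X (k-2)) := pa _ (by omega) _ (by omega) (by omega)
        have hxk2 : G.Adj x' (X (k-2)) := hadj (k - 2) (by omega) (by omega)
        apply hn5
        refine mkF5 G (X (k-2)) w (X k) (X (k-1)) x' y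
          (fun h => (hT.wneX (k-2)) h.symm)
          (fun h => by have := injX (k-2) (by omega) k (by omega) h; omega)
          (hT.wneX k)
          (Ne.symm (hx'X (k-1))) (Ne.symm (hT.yneX (k-1))) hx'y
          ?_ ?_ ?_ ?_
          (cm _ _ aK1K2) (cm _ _ hxk2)
          (fun h => by have := (adjY (k-2) (by omega)).1 (cm _ _ h); omega)
          hwk1 (cm _ _ hw) hT.adj_wy
          aKK1 (cm _ _ hmid) (cm _ _ hAyk)
          (hT.signWX ht2b (k-1) (by omega)) ((G.sign_symm (X k) x').trans hneg)
        · exact (bool3 _ _ _ (G.bipartite hT.adj_wy) (Ne.symm (G.bipartite hAyk))).trans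
            (bool3 _ _ _ (G.bipartite aKK1) (Ne.symm (G.bipartite aK1K2)))
        · exact bool3 _ _ _ (G.bipartite aKK1) (Ne.symm (G.bipartite aK1K2))
        · exact bool3 _ _ _ (G.bipartite hmid) (Ne.symm (G.bipartite aKK1))
        · exact bool3 _ _ _ (G.bipartite hAyk) (Ne.symm (G.bipartite aKK1))
    · -- type 1 : D₉ / D₁₀
      have hnt2 : t2 = false := by
        cases h : t2
        · rfl
        · exact absurd h ht2b
      have hwno : ∀ t, t ≤ k → ¬ G.Adj w (X t) := fun t ht h => by
        have h2 := (adjW t ht).1 h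
        rw [hnt2] at h2
        exact absurd h2.1 (by simp)
      rcases Nat.lt_or_ge k 2 with hklt | hk2
      · -- k = 1 (j = k = 1 with 1 ≤ j; k = 0 impossible since j ≥ 1)
        have hkk : k = 1 := by omega
        rcases hanchor with ⟨h0, hpk⟩ | ⟨hpk, c, hc0, hcx, hct, hcy, hcz, hcw,
          hcnex, hcney, hcnez, hcnew, hcneX⟩
        · omega
        · have aKK1 : G.Adj (X k) (X (k-1)) := pa _ le_rfl _ (by omega) (by omega)
          have hc0' : G.Adj c (X (k-1)) := by
            have h : k - 1 = 0 := by omega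
            rw [h]; exact hc0
          apply hnd
          refine mkD G (X (k-1)) x' y c (X k) w
            (Ne.symm (hx'X (k-1))) (Ne.symm (hT.yneX (k-1))) hx'y
            (hcneX k le_rfl) hcnew (fun h => (hT.wneX k) h.symm)
            ?_ ?_ ?_ ?_
            (cm _ _ hc0') hcx hw hT.adj_wy hAyk aKK1 hmid hneg
            (fun h => hwno (k-1) (by omega) (cm _ _ h))
            (fun h => hcy (cm _ _ h))
          · exact bool3 _ _ _ (Ne.symm (G.bipartite hcx)) (Ne.symm (G.bipartite hc0'))
          · exact sxy.symm.trans
              (bool3 _ _ _ (Ne.symm (G.bipartite hcx)) (Ne.symm (G.bipartite hc0')))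
          · exact bool3 _ _ _ (G.bipartite aKK1) (G.bipartite hc0')
          · exact bool3 _ _ _ (Ne.symm (G.bipartite hw)) (G.bipartite hcx)
      · -- k ≥ 2 : D₉
        have aKK1 : G.Adj (X k) (X (k-1)) := pa _ le_rfl _ (by omega) (by omega)
        have aK1K2 : G.Adj (X (k-1)) (X (k-2)) := pa _ (by omega) _ (by omega) (by omega)
        have hxk2 : G.Adj x' (X (k-2)) := hadj (k - 2) (by omega) (by omega)
        apply hnd
        refine mkD G (X (k-1)) x' y (X (k-2)) (X k) w
          (Ne.symm (hx'X (k-1))) (Ne.symm (hT.yneX (k-1))) hx'y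
          (fun h => by have := injX (k-2) (by omega) k (by omega) h; omega)
          (fun h => (hT.wneX (k-2)) h.symm) (fun h => (hT.wneX k) h.symm)
          ?_ ?_ ?_ ?_
          aK1K2 (cm _ _ hxk2) hw hT.adj_wy hAyk aKK1 hmid hneg
          (fun h => hwno (k-1) (by omega) (cm _ _ h))
          (fun h => by have := (adjY (k-2) (by omega)).1 h; omega)
        · exact bool3 _ _ _ (G.bipartite hmid) (Ne.symm (G.bipartite aKK1))
        · exact bool3 _ _ _ (G.bipartite hAyk) (Ne.symm (G.bipartite aKK1))
        · exact bool3 _ _ _ (G.bipartite aKK1) (Ne.symm (G.bipartite aK1K2))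
        · exact (bool3 _ _ _ (G.bipartite hT.adj_wy) (Ne.symm (G.bipartite hAyk))).trans
            (bool3 _ _ _ (G.bipartite aKK1) (Ne.symm (G.bipartite aK1K2)))



open SignedBigraph in
lemma SignedBigraph.IsInducedTadpole.swapYZ {V : Type u} {G : SignedBigraph V} {k : ℕ} {t2 : Bool}
    {w y z : V} {x : Fin (k + 1) → V} (hT : G.IsInducedTadpole k t2 w y z x) :
    G.IsInducedTadpole k t2 w z y x where
  t2_len := hT.t2_len
  inj := hT.inj
  w_notmem := hT.w_notmem
  y_notmem := hT.z_notmem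
  z_notmem := hT.y_notmem
  wy := hT.wz
  wz := hT.wy
  yz := hT.yz.symm
  adj_wy := hT.adj_wz
  adj_wz := hT.adj_wy
  not_adj_yz := fun h => hT.not_adj_yz ((G.graph.adj_comm _ _).mp h)
  adj_path := hT.adj_path
  adj_y := hT.adj_z
  adj_z := hT.adj_y
  adj_w := hT.adj_w
  sign_y := hT.sign_z
  sign_z := hT.sign_y
  sign_w := hT.sign_w

open SignedBigraph in
lemma tadVerts_swap {V : Type u} (w y z : V) {n : ℕ} (x : Fin n → V) :
    tadVerts w y z x = tadVerts w z y x := by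
  have h : ({w, y, z} : Set V) = {w, z, y} := by
    ext a
    simp only [Set.mem_insert_iff, Set.mem_singleton_iff]
    tauto
  rw [tadVerts, tadVerts, h]

open SignedBigraph in
/-- Assembly for case II. -/
lemma assembleII {V : Type u} (G : SignedBigraph V) (hF : G.FFree)
    (k : ℕ) (t2 : Bool) (w y z : V) (x : Fin (k + 1) → V)
    (hT : G.IsInducedTadpole k t2 w y z x)
    (x' : V) (hx' : x' ∉ tadVerts w y z x)
    (hconn : G.Adj (x 0) x' ∨
      ∃ c : V, G.Adj (x 0) c ∧ G.Adj x' c ∧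
        ∀ t ∈ tadVerts w y z x, t ≠ x 0 → ¬ G.Adj c t)
    (hw : G.Adj x' w) :
    (∀ t ∈ tadVerts w y z x, G.side t ≠ G.side x' → G.Adj x' t) ∧
    (∀ t ∈ tadVerts w y z x, G.Adj x' t → t ≠ x 0 → t ≠ w →
      G.sign x' t = true) := by
  obtain ⟨C1, C2⟩ := coreII G hF k t2 w y z x hT x' hx' hconn hw
  have hAyk : G.Adj y (tadX k x k) := (hT.adjYX k le_rfl).2 rfl
  have sxy : G.side x' = G.side y :=
    bool3 _ _ _ (G.bipartite hw) (Ne.symm (G.bipartite hT.adj_wy))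
  have sxz : G.side x' = G.side z :=
    bool3 _ _ _ (G.bipartite hw) (Ne.symm (G.bipartite hT.adj_wz))
  have sxk' : G.side x' ≠ G.side (tadX k x k) := by
    rw [sxy]; exact G.bipartite hAyk
  have hXi : ∀ i : Fin (k + 1), tadX k x (i : ℕ) = x i := by
    intro i
    rw [tadX_eq _ (Nat.lt_succ_iff.mp i.isLt)]
  have classOf : ∀ i : Fin (k + 1), G.side (x i) ≠ G.side x' → (i : ℕ) % 2 = k % 2 := by
    intro i hside
    by_contra hcon
    apply hside
    have h1 : G.side (tadX k x (i : ℕ)) ≠ G.side (tadX k x k) := fun h =>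
      hcon ((hT.sideX_iff (i : ℕ) (Nat.lt_succ_iff.mp i.isLt) k le_rfl).1 h)
    have h2 : G.side (tadX k x (i : ℕ)) = G.side x' := bool3 _ _ _ h1 sxk'
    rw [← hXi i]
    exact h2
  constructor
  · intro t ht hside
    rcases ht with hh | ⟨i, rfl⟩
    · simp only [Set.mem_insert_iff, Set.mem_singleton_iff] at hh
      rcases hh with rfl | rfl | rfl
      · exact hw
      · exact absurd sxy.symm hside
      · exact absurd sxz.symm hside
    · have hcl := classOf i hside
      have := C1 (i : ℕ) (Nat.lt_succ_iff.mp i.isLt) hcl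
      rwa [hXi i] at this
  · intro t ht hadj ht0 htw
    rcases ht with hh | ⟨i, rfl⟩
    · simp only [Set.mem_insert_iff, Set.mem_singleton_iff] at hh
      rcases hh with rfl | rfl | rfl
      · exact absurd rfl htw
      · exact absurd sxy (G.bipartite hadj)
      · exact absurd sxz (G.bipartite hadj)
    · have hi0 : (i : ℕ) ≠ 0 := by
        intro h
        apply ht0
        congr 1
        exact Fin.ext h
      have hcl := classOf i (Ne.symm (G.bipartite hadj))
      have := C2 (i : ℕ) (by omega) (Nat.lt_succ_iff.mp i.isLt) hcl
      rwa [hXi i] at this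

open SignedBigraph in
/-- Assembly for case I. -/
lemma assembleI {V : Type u} (G : SignedBigraph V) (hF : G.FFree)
    (k : ℕ) (t2 : Bool) (w y z : V) (x : Fin (k + 1) → V)
    (hT : G.IsInducedTadpole k t2 w y z x)
    (x' : V) (hx' : x' ∉ tadVerts w y z x)
    (hconn : G.Adj (x 0) x' ∨
      ∃ c : V, G.Adj (x 0) c ∧ G.Adj x' c ∧
        ∀ t ∈ tadVerts w y z x, t ≠ x 0 → ¬ G.Adj c t)
    (hy : G.Adj x' y) :
    (∀ t ∈ tadVerts w y z x, G.side t ≠ G.side x' → G.Adj x' t) ∧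
    (∀ t ∈ tadVerts w y z x, G.Adj x' t → t ≠ x 0 → t ≠ w →
      G.sign x' t = true) := by
  obtain ⟨C1, Cz, Csy, Csx⟩ := coreI G hF k t2 w y z x hT x' hx' hconn hy
  have hT' := hT.swapYZ
  have hx'' : x' ∉ tadVerts w z y x := by
    rw [← tadVerts_swap]; exact hx'
  have hconn' : G.Adj (x 0) x' ∨
      ∃ c : V, G.Adj (x 0) c ∧ G.Adj x' c ∧
        ∀ t ∈ tadVerts w z y x, t ≠ x 0 → ¬ G.Adj c t := by
    rcases hconn with h | ⟨c, h1, h2, h3⟩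
    · exact Or.inl h
    · exact Or.inr ⟨c, h1, h2, fun t htm => h3 t (by rw [tadVerts_swap]; exact htm)⟩
  obtain ⟨_, _, Csz, _⟩ := coreI G hF k t2 w z y x hT' x' hx'' hconn' Cz
  have hAyk : G.Adj y (tadX k x k) := (hT.adjYX k le_rfl).2 rfl
  have sxk : G.side x' = G.side (tadX k x k) :=
    bool3 _ _ _ (G.bipartite hy) (Ne.symm (G.bipartite hAyk))
  have swk : G.side w = G.side (tadX k x k) :=
    bool3 _ _ _ (G.bipartite hT.adj_wy) (Ne.symm (G.bipartite hAyk))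
  have hXi : ∀ i : Fin (k + 1), tadX k x (i : ℕ) = x i := by
    intro i
    rw [tadX_eq _ (Nat.lt_succ_iff.mp i.isLt)]
  have classOf : ∀ i : Fin (k + 1), G.side (x i) ≠ G.side x' → (i : ℕ) % 2 ≠ k % 2 := by
    intro i hside hcon
    apply hside
    have h1 : G.side (tadX k x (i : ℕ)) = G.side (tadX k x k) :=
      (hT.sideX_iff (i : ℕ) (Nat.lt_succ_iff.mp i.isLt) k le_rfl).2 hcon
    rw [← hXi i]
    exact h1.trans sxk.symm
  constructor
  · intro t ht hside
    rcases ht with hh | ⟨i, rfl⟩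
    · simp only [Set.mem_insert_iff, Set.mem_singleton_iff] at hh
      rcases hh with rfl | rfl | rfl
      · exact absurd (swk.trans sxk.symm) hside
      · exact hy
      · exact Cz
    · have hcl := classOf i hside
      have := C1 (i : ℕ) (Nat.lt_succ_iff.mp i.isLt) hcl
      rwa [hXi i] at this
  · intro t ht hadj ht0 htw
    rcases ht with hh | ⟨i, rfl⟩
    · simp only [Set.mem_insert_iff, Set.mem_singleton_iff] at hh
      rcases hh with rfl | rfl | rfl
      · exact absurd rfl htw
      · exact Csy
      · exact Csz
    · have hi0 : (i : ℕ) ≠ 0 := by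
        intro h
        apply ht0
        congr 1
        exact Fin.ext h
      have hcl := classOf i (Ne.symm (G.bipartite hadj))
      have := Csx (i : ℕ) (by omega) (Nat.lt_succ_iff.mp i.isLt) hcl
      rwa [hXi i] at this


end Aux

open SignedBigraph in
/-- Lemma 4.6: let `Ĝ` be `ℱ`-free, `T` an induced tadpole with
end `x 0` and heads `w, y, z`, and `x'` a vertex not on `T` such that either
`x 0 x'` is an edge or `x 0` and `x'` have a common neighbour adjacent to no vertex
of `T` other than `x 0`.  If `x'` is adjacent to a head of `T`, then `x'` is
completely adjacent to `T` by positive edges, except that the edges joining `x'` to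
`x 0` or to `w` may be of either sign. -/
theorem tadpole_completeAdjacency
    {V : Type u} (G : SignedBigraph V) (hF : G.FFree)
    (k : ℕ) (t2 : Bool) (w y z : V) (x : Fin (k + 1) → V)
    (hT : G.IsInducedTadpole k t2 w y z x)
    (x' : V) (hx' : x' ∉ tadVerts w y z x)
    (hconn : G.Adj (x 0) x' ∨
      ∃ c : V, G.Adj (x 0) c ∧ G.Adj x' c ∧
        ∀ t ∈ tadVerts w y z x, t ≠ x 0 → ¬ G.Adj c t)
    (hhead : G.Adj x' w ∨ G.Adj x' y ∨ G.Adj x' z) :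
    (∀ t ∈ tadVerts w y z x, G.side t ≠ G.side x' → G.Adj x' t) ∧
    (∀ t ∈ tadVerts w y z x, G.Adj x' t → t ≠ x 0 → t ≠ w →
      G.sign x' t = true) := by
  rcases hhead with hw | hy | hz
  · exact assembleII G hF k t2 w y z x hT x' hx' hconn hw
  · exact assembleI G hF k t2 w y z x hT x' hx' hconn hy
  · have hT' := hT.swapYZ
    have hx'' : x' ∉ tadVerts w z y x := by
      rw [← tadVerts_swap]; exact hx'
    have hconn' : G.Adj (x 0) x' ∨
        ∃ c : V, G.Adj (x 0) c ∧ G.Adj x' c ∧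
          ∀ t ∈ tadVerts w z y x, t ≠ x 0 → ¬ G.Adj c t := by
      rcases hconn with h | ⟨c, h1, h2, h3⟩
      · exact Or.inl h
      · exact Or.inr ⟨c, h1, h2, fun t htm => h3 t (by rw [tadVerts_swap]; exact htm)⟩
    have H := assembleI G hF k t2 w z y x hT' x' hx'' hconn' hz
    rw [tadVerts_swap w y z x]
    exact H
end

section
/- Every positive signed bigraph (a signed bigraph all of whose edges are positive) whose underlying bipartite graph is chordal bipartite is a chordal signed bigraph. -/
universe u

/-! ## Auxiliary machinery for the proof -/

open Finset in
lemma sum_range_two_pow_lt (k : ℕ) : (∑ i ∈ Finset.range k, 2 ^ i) < 2 ^ k := by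
  induction k with
  | zero => simp
  | succ n ih => rw [Finset.sum_range_succ, pow_succ]; omega


lemma bool_ne_ne {a b c : Bool} (h1 : a ≠ c) (h2 : b ≠ c) : a = b := by
  cases a <;> cases b <;> cases c <;> simp_all


section Weight
open scoped Classical
variable {V : Type u} [Fintype V] (G : SimpleGraph V)

noncomputable def nbrWt (w : V → ℕ) (x : V) : ℕ :=
  ∑ y ∈ Finset.univ.filter (fun y => G.Adj x y), 2 ^ (w y)

noncomputable def totWt (g : V → ℤ) : ℤ :=
  ∑ x : V, ∑ y : V, if G.Adj x y then g x * g y else 0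

lemma totWt_eq (g : V → ℤ) :
    totWt G g = ∑ x : V, g x * ∑ y ∈ Finset.univ.filter (fun y => G.Adj x y), g y := by
  unfold totWt
  refine Finset.sum_congr rfl fun x _ => ?_
  rw [Finset.mul_sum, Finset.sum_filter]

lemma exists_weight :
    ∃ w : V → ℕ, Function.Injective w ∧
      ∀ a b : V, ¬ G.Adj a b → a ≠ b → w a < w b → nbrWt G w a ≤ nbrWt G w b := by
  classical
  let N := Fintype.card V
  have : Nonempty (V ≃ Fin N) := ⟨Fintype.equivFin V⟩
  obtain ⟨σ, hσ⟩ := Finite.exists_max (fun σ : V ≃ Fin N =>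
    totWt G (fun x => (2:ℤ) ^ ((σ x : ℕ))))
  refine ⟨fun v => (σ v : ℕ), ?_, ?_⟩
  · intro a b hab
    exact σ.injective (Fin.val_injective hab)
  intro a b hnadj hne hlt
  set h : V → ℤ := fun x => (2:ℤ) ^ ((σ x : ℕ)) with hh
  set g : V → ℤ := fun x => h (Equiv.swap a b x) with hg
  have hle : totWt G g ≤ totWt G h := by
    have := hσ ((Equiv.swap a b).trans σ)
    simpa [hg, hh] using this
  set Wa : ℤ := ∑ y ∈ Finset.univ.filter (fun y => G.Adj a y), h y with hWa
  set Wb : ℤ := ∑ y ∈ Finset.univ.filter (fun y => G.Adj b y), h y with hWb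
  have hga : g a = h b := by simp [hg]
  have hgb : g b = h a := by simp [hg]
  have hgx : ∀ x, x ≠ a → x ≠ b → g x = h x := by
    intro x h1 h2; simp [hg, Equiv.swap_apply_of_ne_of_ne h1 h2]
  have haa : ¬ G.Adj a a := G.irrefl
  have hbb : ¬ G.Adj b b := G.irrefl
  have hba : ¬ G.Adj b a := fun h' => hnadj h'.symm
  have hS : ∀ x : V, (∑ y ∈ Finset.univ.filter (fun y => G.Adj x y), g y)
      = (∑ y ∈ Finset.univ.filter (fun y => G.Adj x y), h y)
        + ((if G.Adj x a then h b - h a else 0) + (if G.Adj x b then h a - h b else 0)) := by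
    intro x
    have hy : ∀ y : V, g y = h y + ((if y = a then h b - h a else 0) + (if y = b then h a - h b else 0)) := by
      intro y
      by_cases h1 : y = a
      · subst h1; simp [hga, hne]
      · by_cases h2 : y = b
        · subst h2; simp [hgb, h1, Ne.symm hne]
        · simp [hgx y h1 h2, h1, h2]
    rw [Finset.sum_congr rfl (fun y _ => hy y), Finset.sum_add_distrib, Finset.sum_add_distrib]
    congr 1
    rw [Finset.sum_filter, Finset.sum_filter]
    congr 1
    · rw [← Finset.sum_filter]
      rw [Finset.sum_ite_eq' _ a (fun _ => h b - h a)]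
      simp [Finset.mem_filter]
    · rw [← Finset.sum_filter]
      rw [Finset.sum_ite_eq' _ b (fun _ => h a - h b)]
      simp [Finset.mem_filter]
  have key : totWt G g = totWt G h + 2 * (h b - h a) * (Wa - Wb) := by
    rw [totWt_eq, totWt_eq]
    have hx : ∀ x : V, g x * (∑ y ∈ Finset.univ.filter (fun y => G.Adj x y), g y)
        = h x * (∑ y ∈ Finset.univ.filter (fun y => G.Adj x y), h y)
          + ((if x = a then (h b - h a) * Wa else 0) + (if x = b then (h a - h b) * Wb else 0)
          + h x * ((if G.Adj x a then h b - h a else 0) + (if G.Adj x b then h a - h b else 0))) := by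
      intro x
      rw [hS x]
      by_cases h1 : x = a
      · subst h1; rw [hga]; simp [haa, hnadj, hne, ← hWa]; ring
      · by_cases h2 : x = b
        · subst h2; rw [hgb]; simp [hbb, hba, h1, ← hWb]; ring
        · rw [hgx x h1 h2]; simp [h1, h2]; ring
    rw [Finset.sum_congr rfl (fun x _ => hx x), Finset.sum_add_distrib, Finset.sum_add_distrib,
      Finset.sum_add_distrib, Finset.sum_ite_eq' _ a, Finset.sum_ite_eq' _ b]
    have e1 : (∑ x : V, h x * ((if G.Adj x a then h b - h a else 0) + (if G.Adj x b then h a - h b else 0)))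
        = Wa * (h b - h a) + Wb * (h a - h b) := by
      rw [hWa, hWb]
      rw [Finset.sum_mul, Finset.sum_mul, Finset.sum_filter, Finset.sum_filter, ← Finset.sum_add_distrib]
      refine Finset.sum_congr rfl fun x _ => ?_
      have c1 : G.Adj x a ↔ G.Adj a x := G.adj_comm x a
      have c2 : G.Adj x b ↔ G.Adj b x := G.adj_comm x b
      rw [mul_add]
      congr 1
      · by_cases hxa : G.Adj a x <;> simp [c1, hxa, mul_comm]
      · by_cases hxb : G.Adj b x <;> simp [c2, hxb, mul_comm]
    rw [e1]
    simp only [Finset.mem_univ, if_true]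
    ring
  have hpow : h a < h b := by
    rw [hh]
    exact pow_lt_pow_right₀ one_lt_two hlt
  have hWab : Wa ≤ Wb := by nlinarith [key, hle]
  have cast1 : Wa = ((nbrWt G (fun v => (σ v : ℕ)) a : ℤ)) := by
    rw [hWa, nbrWt]; push_cast; rfl
  have cast2 : Wb = ((nbrWt G (fun v => (σ v : ℕ)) b : ℤ)) := by
    rw [hWb, nbrWt]; push_cast; rfl
  rw [cast1, cast2] at hWab
  exact_mod_cast hWab
end Weight

section Bin
variable {V : Type u} [Fintype V]

lemma sum_two_pow_lt {w : V → ℕ} (hw : Function.Injective w) (U : Finset V) (k : ℕ)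
    (hU : ∀ z ∈ U, w z < k) : (∑ z ∈ U, 2 ^ (w z)) < 2 ^ k := by
  classical
  calc (∑ z ∈ U, 2 ^ (w z)) = ∑ i ∈ U.image w, 2 ^ i := by
        rw [Finset.sum_image (fun x hx y hy hxy => hw hxy)]
    _ ≤ ∑ i ∈ Finset.range k, 2 ^ i := by
        apply Finset.sum_le_sum_of_subset
        intro i hi
        obtain ⟨z, hz, rfl⟩ := Finset.mem_image.mp hi
        exact Finset.mem_range.mpr (hU z hz)
    _ < 2 ^ k := sum_range_two_pow_lt k

lemma bin_lemma {w : V → ℕ} (hw : Function.Injective w) (S T : Finset V)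
    (hle : (∑ z ∈ S, 2 ^ (w z)) ≤ ∑ z ∈ T, 2 ^ (w z)) (m : V) (hmS : m ∈ S) (hmT : m ∉ T)
    (hmax : ∀ z, w m < w z → (z ∈ S ↔ z ∈ T)) : False := by
  classical
  set A := S.filter (fun z => w m < w z) with hA
  set B := T.filter (fun z => w m < w z) with hB
  have hAB : A = B := by
    ext z; simp only [hA, hB, Finset.mem_filter]
    constructor
    · rintro ⟨h1, h2⟩; exact ⟨(hmax z h2).mp h1, h2⟩
    · rintro ⟨h1, h2⟩; exact ⟨(hmax z h2).mpr h1, h2⟩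
  have hS_ge : (∑ z ∈ A, 2 ^ (w z)) + 2 ^ (w m) ≤ ∑ z ∈ S, 2 ^ (w z) := by
    have hsub : insert m A ⊆ S := by
      intro z hz
      rcases Finset.mem_insert.mp hz with rfl | hz
      · exact hmS
      · exact (Finset.mem_filter.mp hz).1
    have hmA : m ∉ A := by simp [hA]
    calc (∑ z ∈ A, 2 ^ (w z)) + 2 ^ (w m) = ∑ z ∈ insert m A, 2 ^ (w z) := by
          rw [Finset.sum_insert hmA]; ring
      _ ≤ _ := Finset.sum_le_sum_of_subset hsub
  have hT_lt : (∑ z ∈ T, 2 ^ (w z)) < (∑ z ∈ B, 2 ^ (w z)) + 2 ^ (w m) := by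
    have hsplit : ∑ z ∈ T, 2 ^ (w z) = (∑ z ∈ B, 2 ^ (w z)) + ∑ z ∈ T \ B, 2 ^ (w z) := by
      rw [← Finset.sum_union (Finset.disjoint_sdiff)]
      congr 1
      rw [Finset.union_sdiff_of_subset (Finset.filter_subset _ _)]
    rw [hsplit]
    have : (∑ z ∈ T \ B, 2 ^ (w z)) < 2 ^ (w m) := by
      apply sum_two_pow_lt hw
      intro z hz
      obtain ⟨hzT, hzB⟩ := Finset.mem_sdiff.mp hz
      have h1 : ¬ w m < w z := by
        intro h'; exact hzB (Finset.mem_filter.mpr ⟨hzT, h'⟩)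
      have h2 : w z ≠ w m := fun h' => hmT (hw h' ▸ hzT)
      omega
    omega
  rw [hAB] at hS_ge
  omega
end Bin

section SD
open scoped Classical
variable {V : Type u} [Fintype V] (G : SimpleGraph V)

lemma symdiff_max {w : V → ℕ} (hw : Function.Injective w)
    (hlex : ∀ a b : V, ¬ G.Adj a b → a ≠ b → w a < w b → nbrWt G w a ≤ nbrWt G w b)
    {a b : V} (hnadj : ¬ G.Adj a b) (hne : a ≠ b) (hlt : w a < w b)
    {z0 : V} (hz0a : G.Adj a z0) (hz0b : ¬ G.Adj b z0) :
    ∃ m, G.Adj b m ∧ ¬ G.Adj a m ∧ ∀ z, ¬ (G.Adj a z ↔ G.Adj b z) → w z ≤ w m := by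
  classical
  set D := Finset.univ.filter (fun z => ¬ (G.Adj a z ↔ G.Adj b z)) with hD
  have hDne : D.Nonempty := ⟨z0, by simp [hD]; tauto⟩
  obtain ⟨m, hmD, hmax⟩ := Finset.exists_max_image D w hDne
  have hmD' : ¬ (G.Adj a m ↔ G.Adj b m) := by
    have := Finset.mem_filter.mp hmD; exact this.2
  have hmax' : ∀ z, w m < w z → (G.Adj a z ↔ G.Adj b z) := by
    intro z hz
    by_contra hc
    have : z ∈ D := Finset.mem_filter.mpr ⟨Finset.mem_univ _, hc⟩
    exact absurd (hmax z this) (by omega)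
  by_cases hma : G.Adj a m
  · exfalso
    have hmb : ¬ G.Adj b m := fun h' => hmD' (iff_of_true hma h')
    refine bin_lemma (V := V) hw (Finset.univ.filter (fun y => G.Adj a y))
      (Finset.univ.filter (fun y => G.Adj b y)) (hlex a b hnadj hne hlt) m ?_ ?_ ?_
    · simp [hma]
    · simp [hmb]
    · intro z hz
      simp only [Finset.mem_filter, Finset.mem_univ, true_and]
      exact hmax' z hz
  · have hmb : G.Adj b m := by
      by_contra h'
      exact hmD' (iff_of_false hma h')
    refine ⟨m, hmb, hma, ?_⟩
    intro z hz
    exact hmax z (Finset.mem_filter.mpr ⟨Finset.mem_univ _, hz⟩)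
end SD

section Cyc
variable {V : Type u} (G : SimpleGraph V) (side : V → Bool)

set_option maxHeartbeats 1000000 in
lemma closed_ladder_cycle (hbip : ∀ ⦃a b : V⦄, G.Adj a b → side a ≠ side b)
    (m : ℕ) (hm : 3 ≤ m) (r c : ℕ → V)
    (hrinj : ∀ i j, i < m → j < m → r i = r j → i = j)
    (hcinj : ∀ i j, i < m → j < m → c i = c j → i = j)
    (hside : ∀ i j, i < m → j < m → side (r i) ≠ side (c j))
    (hadj : ∀ i j, i < m → j < m →
      (G.Adj (r i) (c j) ↔ (i + 1 = j ∨ j + 1 = i ∨ (i = j ∧ (i = 0 ∨ i + 1 = m))))) :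
    HasLongInducedCycle G := by
  classical
  have h2m : 0 < 2 * m := by omega
  haveI : NeZero (2 * m) := ⟨by omega⟩
  haveI : Fact (1 < 2 * m) := ⟨by omega⟩
  -- index function
  set idx : ℕ → ℕ := fun p => if p ≤ m then p - 1 else 2 * m - p with hidx
  have hidxlt : ∀ p, p < 2 * m → idx p < m := by
    intro p hp; rw [hidx]; dsimp only; split <;> omega
  set f : ZMod (2 * m) → V := fun z => if z.val % 2 = 0 then r (idx z.val) else c (idx z.val) with hf
  have hvlt : ∀ z : ZMod (2 * m), z.val < 2 * m := fun z => ZMod.val_lt z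
  -- same side within rows / cols
  have hrside : ∀ i j, i < m → j < m → side (r i) = side (r j) := by
    intro i j hi hj
    have h1 := hside i 0 hi (by omega)
    have h2 := hside j 0 hj (by omega)
    exact bool_ne_ne h1 h2
  have hcside : ∀ i j, i < m → j < m → side (c i) = side (c j) := by
    intro i j hi hj
    have h1 := hside 0 i (by omega) hi
    have h2 := hside 0 i (by omega) hi
    have h3 := hside 0 j (by omega) hj
    exact bool_ne_ne (Ne.symm h2) (Ne.symm h3)
  have hrr : ∀ i j, i < m → j < m → ¬ G.Adj (r i) (r j) := by
    intro i j hi hj hadj'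
    exact (hbip hadj') (hrside i j hi hj)
  have hcc : ∀ i j, i < m → j < m → ¬ G.Adj (c i) (c j) := by
    intro i j hi hj hadj'
    exact (hbip hadj') (hcside i j hi hj)
  have hrc_ne : ∀ i j, i < m → j < m → r i ≠ c j := by
    intro i j hi hj h
    exact (hside i j hi hj) (by rw [h])
  -- successor characterization
  have hsucc : ∀ z1 z2 : ZMod (2 * m),
      (z2 = z1 + 1) ↔ (z2.val = z1.val + 1 ∨ (z1.val + 1 = 2 * m ∧ z2.val = 0)) := by
    intro z1 z2
    have hv1 : (z1 + 1).val = (z1.val + 1) % (2 * m) := by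
      rw [ZMod.val_add, ZMod.val_one]
    have hmod : (z1.val + 1) % (2 * m) = if z1.val + 1 = 2 * m then 0 else z1.val + 1 := by
      split
      · next h => rw [h, Nat.mod_self]
      · next h => exact Nat.mod_eq_of_lt (by have := hvlt z1; omega)
    constructor
    · rintro rfl
      rw [hv1, hmod]
      split
      · next h => exact Or.inr ⟨h, rfl⟩
      · exact Or.inl rfl
    · intro h
      apply ZMod.val_injective
      rw [hv1, hmod]
      rcases h with h | ⟨h1, h2⟩
      · have hlt2 := hvlt z2
        rw [if_neg (show ¬ (z1.val + 1 = 2 * m) by omega)]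
        exact h
      · rw [if_pos h1]; exact h2
  have hfr : ∀ z : ZMod (2 * m), z.val % 2 = 0 → f z = r (idx z.val) := by
    intro z h; rw [hf]; simp only [h, if_pos]
  have hfc : ∀ z : ZMod (2 * m), ¬ (z.val % 2 = 0) → f z = c (idx z.val) := by
    intro z h; rw [hf]; simp only [h, if_neg, if_false]
  have hidxeq : ∀ p q, p < 2 * m → q < 2 * m → p % 2 = q % 2 → idx p = idx q → p = q := by
    intro p q hp hq hpar
    rw [hidx]; dsimp only
    split_ifs <;> omega
  refine ⟨2 * m, by omega, f, ?_, ?_⟩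
  · -- injectivity
    intro z1 z2 heq
    have hplt : z1.val < 2 * m := hvlt z1
    have hqlt : z2.val < 2 * m := hvlt z2
    apply ZMod.val_injective
    by_cases h1 : z1.val % 2 = 0 <;> by_cases h2 : z2.val % 2 = 0
    · rw [hfr z1 h1, hfr z2 h2] at heq
      exact hidxeq _ _ hplt hqlt (by omega)
        (hrinj _ _ (hidxlt _ hplt) (hidxlt _ hqlt) heq)
    · rw [hfr z1 h1, hfc z2 h2] at heq
      exact absurd heq (hrc_ne _ _ (hidxlt _ hplt) (hidxlt _ hqlt))
    · rw [hfc z1 h1, hfr z2 h2] at heq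
      exact absurd heq.symm (hrc_ne _ _ (hidxlt _ hqlt) (hidxlt _ hplt))
    · rw [hfc z1 h1, hfc z2 h2] at heq
      exact hidxeq _ _ hplt hqlt (by omega)
        (hcinj _ _ (hidxlt _ hplt) (hidxlt _ hqlt) heq)
  · -- adjacency
    intro z1 z2
    have hplt : z1.val < 2 * m := hvlt z1
    have hqlt : z2.val < 2 * m := hvlt z2
    rw [hsucc z1 z2, hsucc z2 z1]
    by_cases h1 : z1.val % 2 = 0 <;> by_cases h2 : z2.val % 2 = 0
    · rw [hfr z1 h1, hfr z2 h2]
      constructor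
      · intro h; exact absurd h (hrr _ _ (hidxlt _ hplt) (hidxlt _ hqlt))
      · intro h; exfalso; omega
    · rw [hfr z1 h1, hfc z2 h2, hadj _ _ (hidxlt _ hplt) (hidxlt _ hqlt)]
      rw [hidx]; dsimp only
      split_ifs <;> omega
    · rw [hfc z1 h1, hfr z2 h2, G.adj_comm, hadj _ _ (hidxlt _ hqlt) (hidxlt _ hplt)]
      rw [hidx]; dsimp only
      split_ifs <;> omega
    · rw [hfc z1 h1, hfc z2 h2]
      constructor
      · intro h; exact absurd h (hcc _ _ (hidxlt _ hplt) (hidxlt _ hqlt))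
      · intro h; exfalso; omega
end Cyc

section Ladder
variable {V : Type u} [Fintype V] (G : SimpleGraph V) (side : V → Bool) (w : V → ℕ)

def IsLadder (n : ℕ) (r c : ℕ → V) : Prop :=
  2 ≤ n ∧
  (∀ i j, i < j → j < n → w (r i) < w (r j)) ∧
  (∀ i j, i < j → j < n → w (c i) < w (c j)) ∧
  (∀ i j, i < n → j < n → side (r i) ≠ side (c j)) ∧
  (∀ i j, i < n → j < n →
    (G.Adj (r i) (c j) ↔ (i + 1 = j ∨ j + 1 = i ∨ (i = 0 ∧ j = 0)))) ∧
  (∀ i, i + 2 < n → ∀ z, w (c (i + 2)) < w z → (G.Adj (r i) z ↔ G.Adj (r (i + 1)) z)) ∧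
  (∀ j, j + 2 < n → ∀ z, w (r (j + 2)) < w z → (G.Adj (c j) z ↔ G.Adj (c (j + 1)) z))

variable (hbip : ∀ ⦃a b : V⦄, G.Adj a b → side a ≠ side b)
  (hw : Function.Injective w)
  (hlex : ∀ a b : V, ¬ G.Adj a b → a ≠ b → w a < w b → nbrWt G w a ≤ nbrWt G w b)
  (hcb : ¬ HasLongInducedCycle G)

include hbip hw hlex hcb in
lemma ladder_extend {n : ℕ} {r c : ℕ → V} (hL : IsLadder G side w n r c) :
    ∃ r' c', IsLadder G side w (n + 1) r' c' := by
  classical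
  obtain ⟨hn, hrm, hcm, hsd, hadj, hrag, hcag⟩ := hL
  -- same-side facts
  have hrs : ∀ i j, i < n → j < n → side (r i) = side (r j) := fun i j hi hj =>
    bool_ne_ne (hsd i 0 hi (by omega)) (hsd j 0 hj (by omega))
  have hcs : ∀ i j, i < n → j < n → side (c i) = side (c j) := fun i j hi hj =>
    bool_ne_ne (fun h => hsd 0 i (by omega) hi h.symm) (fun h => hsd 0 j (by omega) hj h.symm)
  -- row step
  have hra_nadj : ¬ G.Adj (r (n-2)) (r (n-1)) := fun h =>
    (hbip h) (hrs _ _ (by omega) (by omega))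
  have hra_lt : w (r (n-2)) < w (r (n-1)) := hrm _ _ (by omega) (by omega)
  have hra_ne : r (n-2) ≠ r (n-1) := fun h => by rw [h] at hra_lt; omega
  have hz0a : G.Adj (r (n-2)) (c (n-1)) := by
    rw [hadj _ _ (by omega) (by omega)]; omega
  have hz0b : ¬ G.Adj (r (n-1)) (c (n-1)) := by
    rw [hadj _ _ (by omega) (by omega)]; omega
  obtain ⟨cN, hcN_adj, hcN_nadj, hcN_max⟩ :=
    symdiff_max G hw hlex hra_nadj hra_ne hra_lt hz0a hz0b
  have hcN_gt : w (c (n-1)) < w cN := by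
    have h1 : w (c (n-1)) ≤ w cN := hcN_max _ (by tauto)
    have h2 : c (n-1) ≠ cN := fun h => hz0b (h ▸ hcN_adj)
    have h3 : w (c (n-1)) ≠ w cN := fun h => h2 (hw h)
    omega
  -- column step
  have hca_nadj : ¬ G.Adj (c (n-2)) (c (n-1)) := fun h =>
    (hbip h) (hcs _ _ (by omega) (by omega))
  have hca_lt : w (c (n-2)) < w (c (n-1)) := hcm _ _ (by omega) (by omega)
  have hca_ne : c (n-2) ≠ c (n-1) := fun h => by rw [h] at hca_lt; omega
  have hz1a : G.Adj (c (n-2)) (r (n-1)) := by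
    rw [G.adj_comm, hadj _ _ (by omega) (by omega)]; omega
  have hz1b : ¬ G.Adj (c (n-1)) (r (n-1)) := fun h => hz0b h.symm
  obtain ⟨rN, hrN_adj, hrN_nadj, hrN_max⟩ :=
    symdiff_max G hw hlex hca_nadj hca_ne hca_lt hz1a hz1b
  have hrN_gt : w (r (n-1)) < w rN := by
    have h1 : w (r (n-1)) ≤ w rN := hrN_max _ (by tauto)
    have h2 : r (n-1) ≠ rN := fun h => hz1b (h ▸ hrN_adj)
    have h3 : w (r (n-1)) ≠ w rN := fun h => h2 (hw h)
    omega
  -- zeros for new column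
  have zerosR : ∀ d i, i + d + 2 = n → ¬ G.Adj (r i) cN := by
    intro d
    induction d with
    | zero => intro i hi; have : i = n - 2 := by omega
              rw [this]; exact hcN_nadj
    | succ d ih =>
      intro i hi
      have h2 : i + 2 < n := by omega
      have hwlt : w (c (i + 2)) < w cN := by
        rcases Nat.lt_or_ge (i + 2) (n - 1) with h | h
        · exact lt_trans (hcm _ _ h (by omega)) hcN_gt
        · have : i + 2 = n - 1 := by omega
          rw [this]; exact hcN_gt
      rw [hrag i h2 cN hwlt]
      exact ih (i + 1) (by omega)
  have zerosC : ∀ d j, j + d + 2 = n → ¬ G.Adj (c j) rN := by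
    intro d
    induction d with
    | zero => intro j hj; have : j = n - 2 := by omega
              rw [this]; exact hrN_nadj
    | succ d ih =>
      intro j hj
      have h2 : j + 2 < n := by omega
      have hwlt : w (r (j + 2)) < w rN := by
        rcases Nat.lt_or_ge (j + 2) (n - 1) with h | h
        · exact lt_trans (hrm _ _ h (by omega)) hrN_gt
        · have : j + 2 = n - 1 := by omega
          rw [this]; exact hrN_gt
      rw [hcag j h2 rN hwlt]
      exact ih (j + 1) (by omega)
  have zerosR' : ∀ i, i < n - 1 → ¬ G.Adj (r i) cN := by
    intro i hi; exact zerosR (n - 2 - i) i (by omega)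
  have zerosC' : ∀ j, j < n - 1 → ¬ G.Adj (c j) rN := by
    intro j hj; exact zerosC (n - 2 - j) j (by omega)
  -- new functions
  set R : ℕ → V := fun i => if i = n then rN else r i with hR
  set C : ℕ → V := fun j => if j = n then cN else c j with hC
  have hRe : ∀ i, i < n → R i = r i := fun i hi => by rw [hR]; simp [Nat.ne_of_lt hi]
  have hCe : ∀ j, j < n → C j = c j := fun j hj => by rw [hC]; simp [Nat.ne_of_lt hj]
  have hRn : R n = rN := by rw [hR]; simp
  have hCn : C n = cN := by rw [hC]; simp
  -- side facts for new vertices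
  have hside_cN : side cN ≠ side (r (n-1)) := fun h => (hbip hcN_adj) h.symm
  have hside_rN : side rN ≠ side (c (n-1)) := fun h => (hbip hrN_adj) h.symm
  have hside_cN' : ∀ j, j < n → side cN = side (c j) := fun j hj =>
    bool_ne_ne hside_cN (fun h => hsd (n-1) j (by omega) hj h.symm)
  have hside_rN' : ∀ i, i < n → side rN = side (r i) := fun i hi =>
    bool_ne_ne hside_rN (fun h => hsd i (n-1) hi (by omega) h)
  -- new strict monotonicity
  have hrm' : ∀ i j, i < j → j < n + 1 → w (R i) < w (R j) := by
    intro i j hij hj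
    by_cases hjn : j = n
    · rw [hjn, hRn, hRe i (by omega)]
      rcases Nat.lt_or_ge i (n-1) with h | h
      · exact lt_trans (hrm i (n-1) h (by omega)) hrN_gt
      · have : i = n - 1 := by omega
        rw [this]; exact hrN_gt
    · rw [hRe i (by omega), hRe j (by omega)]; exact hrm i j hij (by omega)
  have hcm' : ∀ i j, i < j → j < n + 1 → w (C i) < w (C j) := by
    intro i j hij hj
    by_cases hjn : j = n
    · rw [hjn, hCn, hCe i (by omega)]
      rcases Nat.lt_or_ge i (n-1) with h | h
      · exact lt_trans (hcm i (n-1) h (by omega)) hcN_gt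
      · have : i = n - 1 := by omega
        rw [this]; exact hcN_gt
    · rw [hCe i (by omega), hCe j (by omega)]; exact hcm i j hij (by omega)
  -- new side condition
  have hsd' : ∀ i j, i < n + 1 → j < n + 1 → side (R i) ≠ side (C j) := by
    intro i j hi hj
    by_cases hin : i = n <;> by_cases hjn : j = n
    · rw [hin, hjn, hRn, hCn, hside_rN' (n-1) (by omega)]
      exact fun h => hside_cN h.symm
    · rw [hin, hRn, hCe j (by omega), hside_rN' 0 (by omega)]
      exact hsd 0 j (by omega) (by omega)
    · rw [hjn, hCn, hRe i (by omega), hside_cN' 0 (by omega)]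
      exact hsd i 0 (by omega) (by omega)
    · rw [hRe i (by omega), hCe j (by omega)]
      exact hsd i j (by omega) (by omega)
  -- adjacency on new arrays, except the new corner
  have hadj' : ∀ i j, i < n + 1 → j < n + 1 → ¬ (i = n ∧ j = n) →
      (G.Adj (R i) (C j) ↔ (i + 1 = j ∨ j + 1 = i ∨ (i = 0 ∧ j = 0))) := by
    intro i j hi hj hcorner
    by_cases hin : i = n <;> by_cases hjn : j = n
    · exact absurd ⟨hin, hjn⟩ hcorner
    · rw [hin, hRn, hCe j (by omega)]
      by_cases hjm : j = n - 1
      · rw [hjm]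
        exact iff_of_true hrN_adj.symm (by omega)
      · exact iff_of_false (fun h => zerosC' j (by omega) h.symm) (by omega)
    · rw [hjn, hCn, hRe i (by omega)]
      by_cases him : i = n - 1
      · rw [him]
        exact iff_of_true hcN_adj (by omega)
      · exact iff_of_false (zerosR' i (by omega)) (by omega)
    · rw [hRe i (by omega), hCe j (by omega)]
      exact hadj i j (by omega) (by omega)
  by_cases hclose : G.Adj rN cN
  · -- closed ladder: long induced cycle, contradiction
    exfalso
    apply hcb
    apply closed_ladder_cycle G side hbip (n + 1) (by omega) R C
    · intro i j hi hj heq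
      rcases lt_trichotomy i j with h | h | h
      · have := hrm' i j h hj; rw [heq] at this; omega
      · exact h
      · have := hrm' j i h hi; rw [heq] at this; omega
    · intro i j hi hj heq
      rcases lt_trichotomy i j with h | h | h
      · have := hcm' i j h hj; rw [heq] at this; omega
      · exact h
      · have := hcm' j i h hi; rw [heq] at this; omega
    · exact hsd'
    · intro i j hi hj
      by_cases hcorner : i = n ∧ j = n
      · obtain ⟨rfl, rfl⟩ := hcorner
        rw [hRn, hCn]
        exact iff_of_true hclose (by omega)
      · rw [hadj' i j hi hj hcorner]
        have : ¬ (i = n ∧ j = n) := hcorner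
        omega
  · -- extend the ladder
    refine ⟨R, C, by omega, hrm', hcm', hsd', ?_, ?_, ?_⟩
    · intro i j hi hj
      by_cases hcorner : i = n ∧ j = n
      · obtain ⟨rfl, rfl⟩ := hcorner
        rw [hRn, hCn]
        exact iff_of_false hclose (by omega)
      · exact hadj' i j hi hj hcorner
    · intro i h2 z hz
      by_cases hin : i + 2 = n
      · have hieq : i = n - 2 := by omega
        rw [hin, hCn] at hz
        rw [hRe i (by omega), hRe (i+1) (by omega), hieq,
          show n - 2 + 1 = n - 1 by omega]
        by_contra hniff
        have := hcN_max z (by tauto)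
        omega
      · rw [hCe (i+2) (by omega)] at hz
        rw [hRe i (by omega), hRe (i+1) (by omega)]
        exact hrag i (by omega) z hz
    · intro j h2 z hz
      by_cases hjn : j + 2 = n
      · have hjeq : j = n - 2 := by omega
        rw [hjn, hRn] at hz
        rw [hCe j (by omega), hCe (j+1) (by omega), hjeq,
          show n - 2 + 1 = n - 1 by omega]
        by_contra hniff
        have := hrN_max z (by tauto)
        omega
      · rw [hRe (j+2) (by omega)] at hz
        rw [hCe j (by omega), hCe (j+1) (by omega)]
        exact hcag j (by omega) z hz

include hbip hw hlex hcb in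
lemma no_ladder : ∀ n r c, ¬ IsLadder G side w n r c := by
  intro n r c hL
  have grow : ∀ j : ℕ, ∃ r' c', IsLadder G side w (n + j) r' c' := by
    intro j
    induction j with
    | zero => exact ⟨r, c, hL⟩
    | succ j ih =>
      obtain ⟨r', c', h⟩ := ih
      exact ladder_extend G side w hbip hw hlex hcb h
  obtain ⟨r', c', h⟩ := grow (Fintype.card V + 1)
  obtain ⟨hn2, hrm, _, _, _, _, _⟩ := h
  have hinj : Function.Injective (fun i : Fin (n + (Fintype.card V + 1)) => r' (i : ℕ)) := by
    intro i j heq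
    have heq' : r' (i : ℕ) = r' (j : ℕ) := heq
    rcases lt_trichotomy (i : ℕ) (j : ℕ) with h' | h' | h'
    · have := hrm i j h' j.isLt; rw [heq'] at this; omega
    · exact Fin.ext h'
    · have := hrm j i h' i.isLt; rw [heq'] at this; omega
  have hcard := Fintype.card_le_of_injective _ hinj
  simp only [Fintype.card_fin] at hcard
  omega
end Ladder

section Bisimp
open scoped Classical
variable {V : Type u} [Fintype V] (G : SimpleGraph V)

lemma exists_bisimplicial (side : V → Bool)
    (hbip : ∀ ⦃a b : V⦄, G.Adj a b → side a ≠ side b)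
    (hcb : ¬ HasLongInducedCycle G) (hedge : ∃ x y, G.Adj x y) :
    ∃ a b, G.Adj a b ∧
      ∀ x, G.Adj a x → x ≠ b → ∀ y, G.Adj b y → y ≠ a → G.Adj x y := by
  classical
  obtain ⟨w, hw, hlex⟩ := exists_weight G
  set NI := Finset.univ.filter (fun v : V => ∃ u, G.Adj v u) with hNI
  obtain ⟨a0, b0, hab0⟩ := hedge
  have hNIne : NI.Nonempty := ⟨a0, by simp [hNI]; exact ⟨b0, hab0⟩⟩
  obtain ⟨a, haNI, hamin⟩ := Finset.exists_min_image NI w hNIne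
  obtain ⟨u0, hu0⟩ : ∃ u, G.Adj a u := by
    have := Finset.mem_filter.mp haNI; exact this.2
  set NB := Finset.univ.filter (fun y : V => G.Adj a y) with hNB
  have hNBne : NB.Nonempty := ⟨u0, by simp [hNB, hu0]⟩
  obtain ⟨b, hbNB, hbmin⟩ := Finset.exists_min_image NB w hNBne
  have hadjab : G.Adj a b := (Finset.mem_filter.mp hbNB).2
  refine ⟨a, b, hadjab, ?_⟩
  intro x hax hxb y hby hya
  by_contra hnxy
  apply no_ladder G side w hbip hw hlex hcb 2
    (fun i => if i = 0 then a else y) (fun j => if j = 0 then b else x)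
  have hya' : G.Adj y b := hby.symm
  have hway : w a < w y := by
    have h1 : y ∈ NI := by simp [hNI]; exact ⟨b, hya'⟩
    have h2 : w a ≤ w y := hamin y h1
    have h3 : w a ≠ w y := fun h => hya (hw h).symm
    omega
  have hwbx : w b < w x := by
    have h1 : x ∈ NB := by simp [hNB, hax]
    have h2 : w b ≤ w x := hbmin x h1
    have h3 : w b ≠ w x := fun h => hxb (hw h).symm
    omega
  have hsab : side a ≠ side b := hbip hadjab
  have hsax : side x ≠ side a := hbip hax.symm
  have hsyb : side y ≠ side b := hbip hya'
  have hsya : side y = side a := bool_ne_ne hsyb hsab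
  have hsxb : side x = side b := bool_ne_ne hsax (fun h => hsab h.symm)
  refine ⟨le_refl 2, ?_, ?_, ?_, ?_, ?_, ?_⟩
  · intro i j hij hj
    have : i = 0 ∧ j = 1 := by omega
    obtain ⟨rfl, rfl⟩ := this
    simpa using hway
  · intro i j hij hj
    have : i = 0 ∧ j = 1 := by omega
    obtain ⟨rfl, rfl⟩ := this
    simpa using hwbx
  · intro i j hi hj
    by_cases h1 : i = 0 <;> by_cases h2 : j = 0 <;> simp only [h1, h2, if_pos, if_neg,
      if_true, if_false, reduceIte]
    · exact hsab
    · exact fun h => hsax h.symm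
    · exact hsyb
    · rw [hsya, hsxb]; exact hsab
  · intro i j hi hj
    by_cases h1 : i = 0 <;> by_cases h2 : j = 0 <;> simp [h1, h2]
    · exact hadjab
    · constructor
      · intro; omega
      · intro; exact hax
    · constructor
      · intro; omega
      · intro; exact hya'
    · have hi1 : i = 1 := by omega
      have hj1 : j = 1 := by omega
      constructor
      · intro h; exact absurd h.symm hnxy
      · intro h; omega
  · intro i h2; omega
  · intro j h2; omega

lemma zmod_one_ne_zero {n : ℕ} (hn : 6 ≤ n) : (1 : ZMod n) ≠ 0 := by
  haveI : NeZero n := ⟨by omega⟩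
  haveI : Fact (1 < n) := ⟨by omega⟩
  intro h
  have h2 := congrArg ZMod.val h
  rw [ZMod.val_one, ZMod.val_zero] at h2
  omega

lemma no_long_del (G : SimpleGraph V) {a b : V} (hab : G.Adj a b)
    (hbis : ∀ x, G.Adj a x → x ≠ b → ∀ y, G.Adj b y → y ≠ a → G.Adj x y)
    (hcb : ¬ HasLongInducedCycle G) :
    ¬ HasLongInducedCycle (G.deleteEdges {s(a, b)}) := by
  rintro ⟨n, hn6, f, hfinj, hf⟩
  haveI : NeZero n := ⟨by omega⟩
  have h10 : (1 : ZMod n) ≠ 0 := zmod_one_ne_zero hn6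
  have hG' : ∀ x y : V, (G.deleteEdges {s(a,b)}).Adj x y ↔ (G.Adj x y ∧ s(x,y) ≠ s(a,b)) := by
    intro x y
    rw [SimpleGraph.deleteEdges_adj]
    simp
  -- helper: f induced in G under "no nonconsecutive chord a-b on cycle"
  have main : ∀ p q : ZMod n, f p = a → f q = b → (q = p + 1 ∨ p = q + 1) → False := by
    intro p q hp hq hcons
    -- f is an induced long cycle in G itself
    apply hcb
    refine ⟨n, hn6, f, hfinj, ?_⟩
    intro i j
    constructor
    · intro hadj
      by_cases hs : s(f i, f j) = s(a, b)
      · rw [Sym2.eq_iff] at hs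
        rcases hs with ⟨h1, h2⟩ | ⟨h1, h2⟩
        · have hip : i = p := hfinj (h1.trans hp.symm)
          have hjq : j = q := hfinj (h2.trans hq.symm)
          subst hip; subst hjq; tauto
        · have hip : i = q := hfinj (h1.trans hq.symm)
          have hjq : j = p := hfinj (h2.trans hp.symm)
          subst hip; subst hjq; tauto
      · exact (hf i j).mp ((hG' _ _).mpr ⟨hadj, hs⟩)
    · intro hcons'
      exact ((hG' _ _).mp ((hf i j).mpr hcons')).1
  by_cases hpa : ∃ p, f p = a
  · by_cases hqb : ∃ q, f q = b
    · obtain ⟨p, hp⟩ := hpa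
      obtain ⟨q, hq⟩ := hqb
      by_cases hcons : q = p + 1 ∨ p = q + 1
      · exact main p q hp hq hcons
      · push_neg at hcons
        obtain ⟨hc1, hc2⟩ := hcons
        -- chord case
        have hadjc : (G.deleteEdges {s(a,b)}).Adj (f p) (f (p+1)) := (hf p (p+1)).mpr (Or.inl rfl)
        have hadjd : (G.deleteEdges {s(a,b)}).Adj (f q) (f (q+1)) := (hf q (q+1)).mpr (Or.inl rfl)
        have hac : G.Adj a (f (p+1)) := by
          rw [← hp]; exact ((hG' _ _).mp hadjc).1
        have hbd : G.Adj b (f (q+1)) := by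
          rw [← hq]; exact ((hG' _ _).mp hadjd).1
        have hcnb : f (p+1) ≠ b := by
          intro h
          exact hc1 (hfinj (hq.trans h.symm))
        have hdna : f (q+1) ≠ a := by
          intro h
          exact hc2 (hfinj (hp.trans h.symm))
        have hcd : G.Adj (f (p+1)) (f (q+1)) := hbis _ hac hcnb _ hbd hdna
        have hs : s(f (p+1), f (q+1)) ≠ s(a, b) := by
          intro hseq
          rw [Sym2.eq_iff] at hseq
          rcases hseq with ⟨h1, h2⟩ | ⟨h1, h2⟩
          · have hpp : p + 1 = p := hfinj (h1.trans hp.symm)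
            apply h10
            have h0 : p + 1 = p + 0 := by rw [add_zero]; exact hpp
            exact add_left_cancel h0
          · exact hc1 (hfinj (h1.trans hq.symm)).symm
        have := (hf (p+1) (q+1)).mp ((hG' _ _).mpr ⟨hcd, hs⟩)
        rcases this with h | h
        · exact hc1 (add_right_cancel h)
        · exact hc2 (add_right_cancel h)
    · -- b not on cycle
      apply hcb
      refine ⟨n, hn6, f, hfinj, ?_⟩
      intro i j
      constructor
      · intro hadj
        by_cases hs : s(f i, f j) = s(a, b)
        · rw [Sym2.eq_iff] at hs
          exfalso
          rcases hs with ⟨h1, h2⟩ | ⟨h1, h2⟩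
          · exact hqb ⟨j, h2⟩
          · exact hqb ⟨i, h1⟩
        · exact (hf i j).mp ((hG' _ _).mpr ⟨hadj, hs⟩)
      · intro hcons'
        exact ((hG' _ _).mp ((hf i j).mpr hcons')).1
  · -- a not on cycle
    apply hcb
    refine ⟨n, hn6, f, hfinj, ?_⟩
    intro i j
    constructor
    · intro hadj
      by_cases hs : s(f i, f j) = s(a, b)
      · rw [Sym2.eq_iff] at hs
        exfalso
        rcases hs with ⟨h1, h2⟩ | ⟨h1, h2⟩
        · exact hpa ⟨i, h1⟩
        · exact hpa ⟨j, h2⟩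
      · exact (hf i j).mp ((hG' _ _).mpr ⟨hadj, hs⟩)
    · intro hcons'
      exact ((hG' _ _).mp ((hf i j).mpr hcons')).1
end Bisimp

namespace SignedBigraph
variable {V : Type u}

lemma sb_ext {G1 G2 : SignedBigraph V} (hg : G1.graph = G2.graph)
    (hs : G1.sign = G2.sign) (hd : G1.side = G2.side) : G1 = G2 := by
  cases G1; cases G2
  dsimp at hg hs hd
  subst hg; subst hs; subst hd
  rfl

lemma delete_empty (G : SignedBigraph V) : G.deleteEdges ∅ = G :=
  sb_ext (SimpleGraph.deleteEdges_empty) rfl rfl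

lemma delete_delete (G : SignedBigraph V) (s t : Set (Sym2 V)) :
    (G.deleteEdges s).deleteEdges t = G.deleteEdges (s ∪ t) :=
  sb_ext (SimpleGraph.deleteEdges_deleteEdges s t) rfl rfl

lemma signedSimplicial_of (G : SignedBigraph V)
    (hpos : ∀ a b : V, G.Adj a b → G.sign a b = true) {a b : V} (hadj : G.Adj a b)
    (hbis : ∀ x, G.graph.Adj a x → x ≠ b → ∀ y, G.graph.Adj b y → y ≠ a → G.graph.Adj x y) :
    G.SignedSimplicial a b := by
  refine ⟨hadj, ?_⟩
  intro c hc d hd hside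
  have hc' : (G.graph.Adj a c ∨ G.graph.Adj b c) ∧ c ≠ a ∧ c ≠ b := by
    obtain ⟨h1, h2⟩ := hc
    refine ⟨?_, ?_, ?_⟩
    · rcases h1 with h | h
      · exact Or.inl h
      · exact Or.inr h
    · intro h; exact h2 (by simp [h])
    · intro h; exact h2 (by simp [h])
  have hd' : (G.graph.Adj a d ∨ G.graph.Adj b d) ∧ d ≠ a ∧ d ≠ b := by
    obtain ⟨h1, h2⟩ := hd
    refine ⟨?_, ?_, ?_⟩
    · rcases h1 with h | h
      · exact Or.inl h
      · exact Or.inr h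
    · intro h; exact h2 (by simp [h])
    · intro h; exact h2 (by simp [h])
  obtain ⟨hcadj, hca, hcb⟩ := hc'
  obtain ⟨hdadj, hda, hdb⟩ := hd'
  have key : G.graph.Adj c d := by
    rcases hcadj with hc1 | hc1 <;> rcases hdadj with hd1 | hd1
    · exfalso
      apply hside
      exact bool_ne_ne (G.bipartite hc1.symm) (G.bipartite hd1.symm)
    · exact hbis c hc1 hcb d hd1 hda
    · exact (hbis d hd1 hdb c hc1 hca).symm
    · exfalso
      apply hside
      exact bool_ne_ne (G.bipartite hc1.symm) (G.bipartite hd1.symm)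
  exact ⟨key, hpos c d key⟩

end SignedBigraph



open SignedBigraph in
/-- every positive signed bigraph whose underlying bipartite graph
is chordal bipartite is a chordal signed bigraph. -/
theorem positiveChordalBigraph_isChordal
    {V : Type u} [Fintype V] (G : SignedBigraph V)
    (hpos : ∀ a b : V, G.Adj a b → G.sign a b = true)
    (hcb : ¬ HasLongInducedCycle G.graph) :
    G.IsChordal := by
  classical
  -- strong induction on the number of edges
  suffices H : ∀ (k : ℕ) (G : SignedBigraph V), G.graph.edgeSet.ncard ≤ k →
      (∀ a b : V, G.Adj a b → G.sign a b = true) →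
      ¬ HasLongInducedCycle G.graph → G.IsChordal by
    exact H G.graph.edgeSet.ncard G le_rfl hpos hcb
  intro k
  induction k with
  | zero =>
    intro G hcard hpos hcb
    refine ⟨[], List.nodup_nil, ?_, ?_⟩
    · intro e
      simp only [List.not_mem_nil, iff_false]
      intro he
      have hfin : G.graph.edgeSet.Finite := Set.toFinite _
      have : G.graph.edgeSet = ∅ := by
        rw [← Set.ncard_eq_zero hfin]
        omega
      rw [this] at he
      exact he
    · intro i h
      simp at h
  | succ k ih =>
    intro G hcard hpos hcb
    by_cases hedge : ∃ x y, G.graph.Adj x y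
    · obtain ⟨a, b, hab, hbis⟩ := exists_bisimplicial G.graph G.side G.bipartite hcb hedge
      set G₁ := G.deleteEdges {s(a, b)} with hG₁
      have hG₁graph : G₁.graph = G.graph.deleteEdges {s(a, b)} := rfl
      have hpos₁ : ∀ x y : V, G₁.Adj x y → G₁.sign x y = true := by
        intro x y h
        exact hpos x y (SimpleGraph.deleteEdges_adj.mp h).1
      have hcb₁ : ¬ HasLongInducedCycle G₁.graph := no_long_del G.graph hab hbis hcb
      have hedgeset : G₁.graph.edgeSet = G.graph.edgeSet \ {s(a, b)} :=
        SimpleGraph.edgeSet_deleteEdges _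
      have habmem : s(a, b) ∈ G.graph.edgeSet := hab
      have hcard₁ : G₁.graph.edgeSet.ncard ≤ k := by
        have hfin : G.graph.edgeSet.Finite := Set.toFinite _
        have h1 : G₁.graph.edgeSet.ncard < G.graph.edgeSet.ncard := by
          rw [hedgeset]
          exact Set.ncard_diff_singleton_lt_of_mem habmem hfin
        omega
      obtain ⟨l₁, hnd₁, hmem₁, hsimp₁⟩ := ih G₁ hcard₁ hpos₁ hcb₁
      refine ⟨s(a, b) :: l₁, ?_, ?_, ?_⟩
      · refine List.nodup_cons.mpr ⟨?_, hnd₁⟩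
        intro hmem
        have : s(a, b) ∈ G₁.graph.edgeSet := (hmem₁ _).mpr hmem
        rw [hedgeset] at this
        exact this.2 rfl
      · intro e
        constructor
        · intro he
          by_cases heq : e = s(a, b)
          · simp [heq]
          · have : e ∈ G₁.graph.edgeSet := by
              rw [hedgeset]; exact ⟨he, heq⟩
            simp [List.mem_cons, (hmem₁ e).mp this]
        · intro he
          rcases List.mem_cons.mp he with rfl | he
          · exact habmem
          · have := (hmem₁ e).mpr he
            rw [hedgeset] at this
            exact this.1
      · intro i h
        match i with
        | 0 =>
          refine ⟨a, b, rfl, ?_⟩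
          have htake : {e : Sym2 V | e ∈ (s(a,b) :: l₁).take 0} = ∅ := by
            simp
          rw [htake, delete_empty]
          exact signedSimplicial_of G hpos hab hbis
        | (j+1) =>
          have hlen : j < l₁.length := by
            simp only [List.length_cons] at h
            omega
          obtain ⟨a', b', hget, hsimp⟩ := hsimp₁ j hlen
          refine ⟨a', b', ?_, ?_⟩
          · rw [← hget]
            rfl
          · have htake : {e : Sym2 V | e ∈ (s(a,b) :: l₁).take (j+1)}
                = {s(a, b)} ∪ {e : Sym2 V | e ∈ l₁.take j} := by
              ext e
              simp [List.take_succ_cons]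
            rw [htake, ← delete_delete]
            exact hsimp
    · -- no edges but ncard ≤ k+1 : same as base case
      refine ⟨[], List.nodup_nil, ?_, ?_⟩
      · intro e
        simp only [List.not_mem_nil, iff_false]
        intro he
        induction e with
        | h x y => exact hedge ⟨x, y, he⟩
      · intro i h
        simp at h
end
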